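/- arXiv:1412.4076 — 3 statements merged into one kernel-verified Lean document; each statement's English description precedes it below -/
import Mathlib

section
/- Let T1 and T2 be rooted binary phylogenetic trees on the same taxon set X, and let f be an optimal character for d_MP(T1,T2) with l_f(T1) < l_f(T2). Then there exists an optimal character f' such that l_{f'}(T1) < l_{f'}(T2) and, for every internal vertex u of T1 both of whose children are leaves (i.e. the children form a cherry), f' assigns both children of u the same state. -/
namespace MPDist

/-- A rooted binary phylogenetic tree: leaves are labelled by taxa,
every internal vertex (including the root) has exactly two children. -/
inductive PTree (X : Type) : Type
  | leaf : X → PTree X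
  | node : PTree X → PTree X → PTree X

namespace PTree

/-- The list of leaf labels (taxa) of a tree. -/
def leaves {X : Type} : PTree X → List X
  | .leaf x => [x]
  | .node l r => l.leaves ++ r.leaves

/-- Relabelling of taxa. -/
def map {X Y : Type} (φ : X → Y) : PTree X → PTree Y
  | .leaf x => .leaf (φ x)
  | .node l r => .node (l.map φ) (r.map φ)

end PTree

/-- `T` is a phylogenetic tree on the taxon set `X`:
its leaves are bijectively labelled by the elements of `X`. -/
def IsPhylo {X : Type} (T : PTree X) : Prop :=
  T.leaves.Nodup ∧ ∀ x : X, x ∈ T.leaves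

/-- A state-labelled binary tree (an extension assigns a state to every vertex). -/
inductive ETree (C : Type) : Type
  | leaf : C → ETree C
  | node : C → ETree C → ETree C → ETree C

namespace ETree

/-- The state at the root. -/
def root {C : Type} : ETree C → C
  | .leaf c => c
  | .node c _ _ => c

/-- The number of edges `{u,v}` with different states at the two endpoints
(substitutions/mutations). -/
def changes {C : Type} [DecidableEq C] : ETree C → ℕ
  | .leaf _ => 0
  | .node c l r =>
      ((if l.root = c then 0 else 1) + (if r.root = c then 0 else 1)) +
        (l.changes + r.changes)

end ETree

/-- `g` is an extension of the character `f` to the tree `T`: it has the same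
shape as `T`, assigns a state to every vertex, and agrees with `f` on the taxa. -/
inductive IsExtension {X C : Type} (f : X → C) : PTree X → ETree C → Prop
  | leaf (x : X) : IsExtension f (.leaf x) (.leaf (f x))
  | node {l r : PTree X} {gl gr : ETree C} (c : C) :
      IsExtension f l gl → IsExtension f r gr →
      IsExtension f (.node l r) (.node c gl gr)

/-- The parsimony score `l_f(T)`: the minimum number of mutation edges
over all extensions of `f` to `T`. -/
noncomputable def pscore {X C : Type} [DecidableEq C] (f : X → C) (T : PTree X) : ℕ :=
  sInf { k : ℕ | ∃ g : ETree C, IsExtension f T g ∧ g.changes = k }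

/-- The MP distance `d_MP(T1,T2) = max_f |l_f(T1) − l_f(T2)|`, the maximum taken
over all characters `f` on the taxon set (states drawn from `ℕ`). -/
noncomputable def dMP {X : Type} (T1 T2 : PTree X) : ℕ :=
  sSup { k : ℕ | ∃ f : X → ℕ, k = ((pscore f T1 : ℤ) - (pscore f T2 : ℤ)).natAbs }

/-- `d^i_MP(T1,T2)`: as `dMP`, but over characters using at most `i` states. -/
noncomputable def dMPk {X : Type} (i : ℕ) (T1 T2 : PTree X) : ℕ :=
  sSup { k : ℕ | ∃ f : X → Fin i, k = ((pscore f T1 : ℤ) - (pscore f T2 : ℤ)).natAbs }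

/-- `max_f (l_f(T2) − l_f(T1))` over all characters `f`. -/
noncomputable def maxDiff {X : Type} (T1 T2 : PTree X) : ℤ :=
  sSup { d : ℤ | ∃ f : X → ℕ, d = (pscore f T2 : ℤ) - (pscore f T1 : ℤ) }

/-- `max_f (l_f(T2) − l_f(T1))` over all characters `f` with at most `i` states. -/
noncomputable def maxDiffk {X : Type} (i : ℕ) (T1 T2 : PTree X) : ℤ :=
  sSup { d : ℤ | ∃ f : X → Fin i, d = (pscore f T2 : ℤ) - (pscore f T1 : ℤ) }

/-- `gap(T1,T2) = |max_f(l_f(T2)−l_f(T1)) − max_f(l_f(T1)−l_f(T2))|`. -/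
noncomputable def gap {X : Type} (T1 T2 : PTree X) : ℤ :=
  |maxDiff T1 T2 - maxDiff T2 T1|

/-- `gap` restricted to characters with at most `i` states. -/
noncomputable def gapk {X : Type} (i : ℕ) (T1 T2 : PTree X) : ℤ :=
  |maxDiffk i T1 T2 - maxDiffk i T2 T1|

/-- `s` occurs as a (rooted) subtree of `t`. -/
inductive IsSubtree {X : Type} : PTree X → PTree X → Prop
  | refl (t : PTree X) : IsSubtree t t
  | left {s l r : PTree X} : IsSubtree s l → IsSubtree s (.node l r)
  | right {s l r : PTree X} : IsSubtree s r → IsSubtree s (.node l r)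

/-- Taxa `a`, `b` form a cherry of `T`: they are leaves with a common parent. -/
def IsCherry {X : Type} (T : PTree X) (a b : X) : Prop :=
  IsSubtree (.node (.leaf a) (.leaf b)) T

/-- Relabel a tree on taxa `ℕ` by shifting all labels up by `s` (fresh copies). -/
def shiftT (s : ℕ) (T : PTree ℕ) : PTree ℕ := T.map (fun x => x + s)

/-- `T_a = (((((2,3),4),5),6),1)` on taxa `{1,…,6}` (taxon `j` encoded as `j-1`). -/
def Ta6 : PTree ℕ :=
  .node (.node (.node (.node (.node (.leaf 1) (.leaf 2)) (.leaf 3)) (.leaf 4)) (.leaf 5)) (.leaf 0)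

/-- `T_b = ((((2,6),(3,4)),5),1)` on taxa `{1,…,6}` (taxon `j` encoded as `j-1`). -/
def Tb6 : PTree ℕ :=
  .node (.node (.node (.node (.leaf 1) (.leaf 5)) (.node (.leaf 2) (.leaf 3))) (.leaf 4)) (.leaf 0)

/-- `T_A`: two disjoint copies of `T_a` joined under a new root (12 taxa). -/
def TA12 : PTree ℕ := .node Ta6 (shiftT 6 Ta6)

/-- `T_B`: two disjoint copies of `T_b` joined under a new root (12 taxa). -/
def TB12 : PTree ℕ := .node Tb6 (shiftT 6 Tb6)

/-- `TkA k` is the tree `T^{k+1}_A`: `k+1` disjoint copies of `T_A` arranged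
along a caterpillar backbone (so `TkA 0 = T^1_A = T_A`). -/
def TkA : ℕ → PTree ℕ
  | 0 => TA12
  | k+1 => .node (TkA k) (shiftT (12*(k+1)) TA12)

/-- `TkB k` is the tree `T^{k+1}_B`. -/
def TkB : ℕ → PTree ℕ
  | 0 => TB12
  | k+1 => .node (TkB k) (shiftT (12*(k+1)) TB12)

/-- `T_a = (((5,(6,4)),3),((1,(8,2)),7))` on taxa `{1,…,8}` (taxon `j` encoded as `j-1`). -/
def Ta8 : PTree ℕ :=
  .node (.node (.node (.leaf 4) (.node (.leaf 5) (.leaf 3))) (.leaf 2))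
        (.node (.node (.leaf 0) (.node (.leaf 7) (.leaf 1))) (.leaf 6))

/-- `T_b = (((7,((4,2),6)),3),(8,(1,5)))` on taxa `{1,…,8}` (taxon `j` encoded as `j-1`). -/
def Tb8 : PTree ℕ :=
  .node (.node (.node (.leaf 6) (.node (.node (.leaf 3) (.leaf 1)) (.leaf 5))) (.leaf 2))
        (.node (.leaf 7) (.node (.leaf 0) (.leaf 4)))

/-- `T_A` (2-state construction): two disjoint copies of `T_a` under a new root (16 taxa). -/
def TA16 : PTree ℕ := .node Ta8 (shiftT 8 Ta8)

/-- `T_B` (2-state construction): two disjoint copies of `T_b` under a new root (16 taxa). -/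
def TB16 : PTree ℕ := .node Tb8 (shiftT 8 Tb8)

/-- `T_AA`: two disjoint copies of `T_A` under a new root (32 taxa). -/
def TAA : PTree ℕ := .node TA16 (shiftT 16 TA16)

/-- `T_BB`: two disjoint copies of `T_B` under a new root (32 taxa). -/
def TBB : PTree ℕ := .node TB16 (shiftT 16 TB16)

/-- `TkAA k` is the tree `T^{k+1}_AA` (so `TkAA 0 = T^1_AA = T_AA`). -/
def TkAA : ℕ → PTree ℕ
  | 0 => TAA
  | k+1 => .node (TkAA k) (shiftT (32*(k+1)) TAA)

/-- `TkBB k` is the tree `T^{k+1}_BB`. -/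
def TkBB : ℕ → PTree ℕ
  | 0 => TBB
  | k+1 => .node (TkBB k) (shiftT (32*(k+1)) TBB)


section Aux

variable {X : Type}

/-- A canonical extension. -/
def extOf (f : X → ℕ) : PTree X → ETree ℕ
  | .leaf x => .leaf (f x)
  | .node l r => .node 0 (extOf f l) (extOf f r)

lemma extOf_isExtension (f : X → ℕ) (T : PTree X) : IsExtension f T (extOf f T) := by
  induction T with
  | leaf x => exact .leaf x
  | node l r ihl ihr => exact .node 0 ihl ihr

def nn : PTree X → ℕ
  | .leaf _ => 1
  | .node l r => nn l + nn r + 1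

lemma extOf_changes_le (f : X → ℕ) (T : PTree X) : (extOf f T).changes ≤ 2 * nn T := by
  induction T with
  | leaf x => simp [extOf, ETree.changes, nn]
  | node l r ihl ihr =>
    simp only [extOf, ETree.changes, nn]
    split_ifs <;> omega

lemma pscore_le_changes {f : X → ℕ} {T : PTree X} {g : ETree ℕ} (h : IsExtension f T g) :
    pscore f T ≤ g.changes :=
  Nat.sInf_le ⟨g, h, rfl⟩

lemma exists_opt (f : X → ℕ) (T : PTree X) :
    ∃ g : ETree ℕ, IsExtension f T g ∧ g.changes = pscore f T := by
  have hne : {k : ℕ | ∃ g : ETree ℕ, IsExtension f T g ∧ g.changes = k}.Nonempty :=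
    ⟨_, extOf f T, extOf_isExtension f T, rfl⟩
  exact Nat.sInf_mem hne

lemma pscore_le_bound (f : X → ℕ) (T : PTree X) : pscore f T ≤ 2 * nn T :=
  le_trans (pscore_le_changes (extOf_isExtension f T)) (extOf_changes_le f T)

lemma ext_congr {f f' : X → ℕ} : ∀ {T : PTree X} {g : ETree ℕ}, IsExtension f T g →
    (∀ x ∈ T.leaves, f x = f' x) → IsExtension f' T g := by
  intro T g h
  induction h with
  | leaf x =>
    intro hff
    have hx : f x = f' x := hff x (by simp [PTree.leaves])
    rw [hx]
    exact .leaf x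
  | node c hl hr ihl ihr =>
    intro hff
    refine .node c (ihl ?_) (ihr ?_)
    · intro x hx; exact hff x (by simp [PTree.leaves, hx])
    · intro x hx; exact hff x (by simp [PTree.leaves, hx])

lemma subtree_leaves {s t : PTree X} (h : IsSubtree s t) : ∀ x ∈ s.leaves, x ∈ t.leaves := by
  induction h with
  | refl => intro x hx; exact hx
  | left h ih => intro x hx; simp [PTree.leaves]; exact Or.inl (ih x hx)
  | right h ih => intro x hx; simp [PTree.leaves]; exact Or.inr (ih x hx)

/-- Changing a character at one point changes the score by at most the number of
occurrences of that taxon. -/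
lemma update_exists [DecidableEq X] (f : X → ℕ) (p : X) (c : ℕ) :
    ∀ (T : PTree X) (g : ETree ℕ), IsExtension (Function.update f p c) T g →
    ∃ g' : ETree ℕ, IsExtension f T g' ∧
      g'.changes + (if g'.root = g.root then 0 else 1) ≤ g.changes + T.leaves.count p := by
  intro T
  induction T with
  | leaf x =>
    intro g hg
    cases hg with
    | leaf =>
      refine ⟨.leaf (f x), .leaf x, ?_⟩
      by_cases hx : x = p
      · subst hx
        simp [ETree.changes, ETree.root, PTree.leaves, List.count_cons]
        split_ifs <;> omega
      · simp [ETree.changes, ETree.root, PTree.leaves, List.count_cons,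
          Function.update_of_ne hx, Ne.symm hx]
  | node l r ihl ihr =>
    intro g hg
    cases hg with
    | node d hl hr =>
      rename_i gl gr
      obtain ⟨gl', hgl', h1⟩ := ihl _ hl
      obtain ⟨gr', hgr', h2⟩ := ihr _ hr
      refine ⟨.node d gl' gr', .node d hgl' hgr', ?_⟩
      have hr1 : (ETree.node d gl' gr').root = (ETree.node d gl gr).root := rfl
      rw [hr1, if_pos rfl]
      simp only [ETree.changes, PTree.leaves, List.count_append]
      split_ifs at h1 h2 ⊢ <;> omega

lemma count_le_one_of_nodup [DecidableEq X] {l : List X} (h : l.Nodup) (p : X) : l.count p ≤ 1 :=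
  List.nodup_iff_count_le_one.mp h p

lemma pscore_other [DecidableEq X] {T : PTree X} (hT : T.leaves.Nodup) (f : X → ℕ)
    (p : X) (c : ℕ) : pscore f T ≤ pscore (Function.update f p c) T + 1 := by
  obtain ⟨g, hg, hgc⟩ := exists_opt (Function.update f p c) T
  obtain ⟨g', hg', h⟩ := update_exists f p c T g hg
  have h1 := pscore_le_changes hg'
  have h2 := count_le_one_of_nodup hT p
  split_ifs at h <;> omega

/-- Fitch-style cherry collapse: for a bichromatic cherry one of the two
monochromatic relabellings drops the score (witnessed on extensions). -/
lemma cherry_drop [DecidableEq X] {f : X → ℕ} {a b : X} (hab : f a ≠ f b) :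
    ∀ (T : PTree X), IsSubtree (.node (.leaf a) (.leaf b)) T → T.leaves.Nodup →
    ∀ g : ETree ℕ, IsExtension f T g →
    ∃ f' : X → ℕ,
      (f' = Function.update f b (f a) ∨ f' = Function.update f a (f b)) ∧
      ∃ g' : ETree ℕ, IsExtension f' T g' ∧
        (g'.changes + 1 ≤ g.changes ∧ g'.root = g.root ∨ g'.changes + 2 ≤ g.changes) := by
  intro T
  induction T with
  | leaf x => intro h; cases h
  | node l r ihl ihr =>
    intro hsub hnod g hg
    cases hg with
    | node d hl hr =>
      rename_i gl gr
      have hnodl : l.leaves.Nodup := (List.nodup_append.mp (by simpa [PTree.leaves] using hnod)).1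
      have hnodr : r.leaves.Nodup := (List.nodup_append.mp (by simpa [PTree.leaves] using hnod)).2.1
      have hdisj : l.leaves.Disjoint r.leaves :=
        (List.nodup_append'.mp (by simpa [PTree.leaves] using hnod)).2.2
      cases hsub with
      | refl =>
        -- T = node (leaf a) (leaf b)
        cases hl with | leaf =>
        cases hr with | leaf =>
        have hne : a ≠ b := by
          simp [PTree.leaves, List.nodup_cons] at hnod
          exact hnod
        by_cases hd1 : d = f a
        · refine ⟨Function.update f b (f a), Or.inl rfl,
            ⟨.node (f a) (.leaf (Function.update f b (f a) a)) (.leaf (Function.update f b (f a) b)),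
             .node (f a) (.leaf a) (.leaf b), ?_⟩⟩
          left
          constructor
          · simp [ETree.changes, ETree.root, Function.update_of_ne hne, Function.update_self, hd1,
              Ne.symm hab]
          · simp [ETree.root, hd1]
        · by_cases hd2 : d = f b
          · refine ⟨Function.update f a (f b), Or.inr rfl,
              ⟨.node (f b) (.leaf (Function.update f a (f b) a)) (.leaf (Function.update f a (f b) b)),
               .node (f b) (.leaf a) (.leaf b), ?_⟩⟩
            left
            constructor
            · simp [ETree.changes, ETree.root, Function.update_of_ne (Ne.symm hne),
                Function.update_self, hd2, hab]
            · simp [ETree.root, hd2]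
          · refine ⟨Function.update f b (f a), Or.inl rfl,
              ⟨.node (f a) (.leaf (Function.update f b (f a) a)) (.leaf (Function.update f b (f a) b)),
               .node (f a) (.leaf a) (.leaf b), ?_⟩⟩
            right
            have : f a ≠ d := fun h => hd1 h.symm
            have : f b ≠ d := fun h => hd2 h.symm
            simp [ETree.changes, ETree.root, Function.update_of_ne hne, Function.update_self]
            split_ifs <;> simp_all [ETree.root]
      | left hsub' =>
        obtain ⟨f', hf', g', hg', hc⟩ := ihl hsub' hnodl gl hl
        have haL : a ∈ l.leaves := subtree_leaves hsub' a (by simp [PTree.leaves])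
        have hbL : b ∈ l.leaves := subtree_leaves hsub' b (by simp [PTree.leaves])
        have hfr : ∀ x ∈ r.leaves, f x = f' x := by
          intro x hx
          have hxa : x ≠ a := fun h => hdisj haL (h ▸ hx)
          have hxb : x ≠ b := fun h => hdisj hbL (h ▸ hx)
          rcases hf' with rfl | rfl
          · exact (Function.update_of_ne hxb _ f).symm
          · exact (Function.update_of_ne hxa _ f).symm
        have hr' : IsExtension f' r gr := ext_congr hr hfr
        refine ⟨f', hf', .node d g' gr, .node d hg' hr', ?_⟩
        left
        refine ⟨?_, by simp [ETree.root]⟩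
        simp only [ETree.changes]
        rcases hc with ⟨hc1, hc2⟩ | hc2
        · rw [hc2]; split_ifs <;> omega
        · split_ifs <;> omega
      | right hsub' =>
        obtain ⟨f', hf', g', hg', hc⟩ := ihr hsub' hnodr gr hr
        have haL : a ∈ r.leaves := subtree_leaves hsub' a (by simp [PTree.leaves])
        have hbL : b ∈ r.leaves := subtree_leaves hsub' b (by simp [PTree.leaves])
        have hfr : ∀ x ∈ l.leaves, f x = f' x := by
          intro x hx
          have hxa : x ≠ a := fun h => hdisj (h ▸ hx) haL
          have hxb : x ≠ b := fun h => hdisj (h ▸ hx) hbL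
          rcases hf' with rfl | rfl
          · exact (Function.update_of_ne hxb _ f).symm
          · exact (Function.update_of_ne hxa _ f).symm
        have hl' : IsExtension f' l gl := ext_congr hl hfr
        refine ⟨f', hf', .node d gl g', .node d hl' hg', ?_⟩
        left
        refine ⟨?_, by simp [ETree.root]⟩
        simp only [ETree.changes]
        rcases hc with ⟨hc1, hc2⟩ | hc2
        · rw [hc2]; split_ifs <;> omega
        · split_ifs <;> omega

end Aux

section Aux2

variable {X : Type}

lemma cherry_step [DecidableEq X] {T : PTree X} (hT : T.leaves.Nodup) {a b : X}
    (hch : IsCherry T a b) {f : X → ℕ} (hab : f a ≠ f b) :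
    ∃ f' : X → ℕ,
      (f' = Function.update f b (f a) ∨ f' = Function.update f a (f b)) ∧
      pscore f' T + 1 ≤ pscore f T := by
  obtain ⟨g, hg, hgc⟩ := exists_opt f T
  obtain ⟨f', hf', g', hg', hc⟩ := cherry_drop hab T hch hT g hg
  have h1 := pscore_le_changes hg'
  refine ⟨f', hf', ?_⟩
  rcases hc with ⟨h2, _⟩ | h2 <;> omega

def topPair : PTree X → PTree X → List (X × X)
  | .leaf a, .leaf b => [(a, b)]
  | _, _ => []

def cherryPairs : PTree X → List (X × X)
  | .leaf _ => []
  | .node l r => topPair l r ++ (cherryPairs l ++ cherryPairs r)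

lemma mem_cherryPairs_of_isCherry {a b : X} :
    ∀ {T : PTree X}, IsCherry T a b → (a, b) ∈ cherryPairs T := by
  intro T
  induction T with
  | leaf x => intro h; cases h
  | node l r ihl ihr =>
    intro h
    cases h with
    | refl => simp [cherryPairs, topPair]
    | left h' => simp [cherryPairs]; exact Or.inr (Or.inl (ihl h'))
    | right h' => simp [cherryPairs]; exact Or.inr (Or.inr (ihr h'))

lemma isCherry_of_mem {a b : X} :
    ∀ {T : PTree X}, (a, b) ∈ cherryPairs T → IsCherry T a b := by
  intro T
  induction T with
  | leaf x => intro h; simp [cherryPairs] at h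
  | node l r ihl ihr =>
    intro h
    simp only [cherryPairs, List.mem_append] at h
    rcases h with h | h | h
    · cases l with
      | leaf x =>
        cases r with
        | leaf y =>
          simp [topPair] at h
          obtain ⟨rfl, rfl⟩ := h
          exact IsSubtree.refl _
        | node r1 r2 => simp [topPair] at h
      | node l1 l2 => simp [topPair] at h
    · exact IsSubtree.left (ihl h)
    · exact IsSubtree.right (ihr h)

def flat : List (X × X) → List X
  | [] => []
  | p :: t => p.1 :: p.2 :: flat t

lemma flat_append (s t : List (X × X)) : flat (s ++ t) = flat s ++ flat t := by
  induction s with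
  | nil => simp [flat]
  | cons hd tl ih => simp [flat, ih]

lemma mem_flat {a b : X} : ∀ {l : List (X × X)}, (a, b) ∈ l → a ∈ flat l ∧ b ∈ flat l := by
  intro l
  induction l with
  | nil => intro h; simp at h
  | cons hd tl ih =>
    intro h
    rcases List.mem_cons.mp h with rfl | h'
    · simp [flat]
    · obtain ⟨h1, h2⟩ := ih h'
      simp [flat, h1, h2]

lemma flat_sublist : ∀ T : PTree X, (flat (cherryPairs T)).Sublist T.leaves := by
  intro T
  induction T with
  | leaf x => simp [cherryPairs, flat]
  | node l r ihl ihr =>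
    show (flat (topPair l r ++ (cherryPairs l ++ cherryPairs r))).Sublist (l.leaves ++ r.leaves)
    rw [flat_append, flat_append]
    cases l with
    | leaf x =>
      cases r with
      | leaf y =>
        simp [cherryPairs, topPair, flat, PTree.leaves]
      | node r1 r2 =>
        simp only [cherryPairs, topPair, flat, List.nil_append, PTree.leaves]
        exact List.Sublist.cons x ihr
    | node l1 l2 =>
      have hbase : (flat (cherryPairs (PTree.node l1 l2)) ++ flat (cherryPairs r)).Sublist
          ((PTree.node l1 l2).leaves ++ r.leaves) := List.Sublist.append ihl ihr
      simpa [topPair, flat] using hbase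

lemma ne_of_mem_nodup_flat {a b : X} :
    ∀ {l : List (X × X)}, (flat l).Nodup → (a, b) ∈ l → a ≠ b := by
  intro l
  induction l with
  | nil => intro _ h; simp at h
  | cons hd tl ih =>
    intro hnod h
    simp only [flat, List.nodup_cons] at hnod
    rcases List.mem_cons.mp h with rfl | h'
    · intro hh; exact hnod.1 (by simp [hh])
    · exact ih hnod.2.2 h'

lemma countP_drop (P Q : X × X → Bool) (a b : X) :
    ∀ l : List (X × X), (flat l).Nodup → (a, b) ∈ l →
    P (a, b) = true → Q (a, b) = false →
    (∀ q : X × X, q.1 ≠ a → q.1 ≠ b → q.2 ≠ a → q.2 ≠ b → P q = Q q) →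
    l.countP Q + 1 = l.countP P := by
  intro l
  induction l with
  | nil => intro _ h; simp at h
  | cons hd tl ih =>
    intro hnod hmem hP hQ hag
    simp only [flat, List.nodup_cons] at hnod
    obtain ⟨hn1, hn2, hn3⟩ := hnod
    rcases List.mem_cons.mp hmem with heq | hmem'
    · subst heq
      -- all pairs of tl avoid a, b
      have hsame : tl.countP P = tl.countP Q := by
        apply List.countP_congr
        intro q hq
        obtain ⟨hq1, hq2⟩ := mem_flat hq
        have hPQ : P q = Q q := by
          refine hag q ?_ ?_ ?_ ?_
          · intro h; exact hn1 (by simp [h ▸ hq1])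
          · intro h; exact hn2 (h ▸ hq1)
          · intro h; exact hn1 (by simp [h ▸ hq2])
          · intro h; exact hn2 (h ▸ hq2)
        rw [hPQ]
      simp [List.countP_cons, hP, hQ, hsame]
    · obtain ⟨ha, hb⟩ := mem_flat hmem'
      have hPQ : P hd = Q hd := by
        refine hag hd ?_ ?_ ?_ ?_
        · intro h; exact hn1 (by simp [h.symm ▸ ha])
        · intro h; exact hn1 (by simp [h.symm ▸ hb])
        · intro h; exact hn2 (h.symm ▸ ha)
        · intro h; exact hn2 (h.symm ▸ hb)
      have := ih hn3 hmem' hP hQ hag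
      simp [List.countP_cons, hPQ]
      omega

lemma main_aux [DecidableEq X] (T1 T2 : PTree X) (h1 : IsPhylo T1) (h2 : IsPhylo T2) :
    ∀ (n : ℕ) (f : X → ℕ),
      (cherryPairs T1).countP (fun p => decide (f p.1 ≠ f p.2)) ≤ n →
      ((pscore f T1 : ℤ) - (pscore f T2 : ℤ)).natAbs = dMP T1 T2 →
      pscore f T1 < pscore f T2 →
      ∃ f' : X → ℕ,
        ((pscore f' T1 : ℤ) - (pscore f' T2 : ℤ)).natAbs = dMP T1 T2 ∧
        pscore f' T1 < pscore f' T2 ∧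
        ∀ a b : X, IsCherry T1 a b → f' a = f' b := by
  have hfin : ∀ f : X → ℕ,
      (cherryPairs T1).countP (fun p => decide (f p.1 ≠ f p.2)) = 0 →
      ∀ a b : X, IsCherry T1 a b → f a = f b := by
    intro f h0 a b hch
    have hmem := mem_cherryPairs_of_isCherry hch
    have := List.countP_eq_zero.mp h0 _ hmem
    simpa using this
  intro n
  induction n with
  | zero =>
    intro f hcnt hopt hlt
    exact ⟨f, hopt, hlt, hfin f (Nat.le_zero.mp hcnt)⟩
  | succ n ih =>
    intro f hcnt hopt hlt
    by_cases h0 : (cherryPairs T1).countP (fun p => decide (f p.1 ≠ f p.2)) = 0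
    · exact ⟨f, hopt, hlt, hfin f h0⟩
    · obtain ⟨⟨a, b⟩, hmem, hab'⟩ := List.countP_pos_iff.mp (Nat.pos_of_ne_zero h0)
      have hab : f a ≠ f b := by simpa using hab'
      have hch : IsCherry T1 a b := isCherry_of_mem hmem
      obtain ⟨f', hf', hdrop⟩ := cherry_step h1.1 hch hab
      have hflatnodup : (flat (cherryPairs T1)).Nodup :=
        (flat_sublist T1).nodup h1.1
      have hne : a ≠ b := ne_of_mem_nodup_flat hflatnodup hmem
      have hother : pscore f T2 ≤ pscore f' T2 + 1 := by
        rcases hf' with rfl | rfl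
        · exact pscore_other h2.1 f b (f a)
        · exact pscore_other h2.1 f a (f b)
      have hbdd : BddAbove {k : ℕ | ∃ f : X → ℕ,
          k = ((pscore f T1 : ℤ) - (pscore f T2 : ℤ)).natAbs} := by
        refine ⟨2 * nn T1 + 2 * nn T2, ?_⟩
        rintro k ⟨g, rfl⟩
        have b1 := pscore_le_bound g T1
        have b2 := pscore_le_bound g T2
        omega
      have hle : ((pscore f' T1 : ℤ) - (pscore f' T2 : ℤ)).natAbs ≤ dMP T1 T2 :=
        le_csSup hbdd ⟨f', rfl⟩
      have hopt' : ((pscore f' T1 : ℤ) - (pscore f' T2 : ℤ)).natAbs = dMP T1 T2 := by omega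
      have hlt' : pscore f' T1 < pscore f' T2 := by omega
      have hcount : (cherryPairs T1).countP (fun p => decide (f' p.1 ≠ f' p.2)) + 1 =
          (cherryPairs T1).countP (fun p => decide (f p.1 ≠ f p.2)) := by
        refine countP_drop _ _ a b _ hflatnodup hmem (by simpa using hab) ?_ ?_
        · rcases hf' with rfl | rfl
          · simp [Function.update_of_ne hne, Function.update_self]
          · simp [Function.update_of_ne (Ne.symm hne), Function.update_self]
        · intro q hq1 hq2 hq3 hq4
          rcases hf' with rfl | rfl
          · simp [Function.update_of_ne hq2, Function.update_of_ne hq4]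
          · simp [Function.update_of_ne hq1, Function.update_of_ne hq3]
      exact ih f' (by omega) hopt' hlt'

end Aux2

/-- from an optimal character `f` with `l_f(T1) < l_f(T2)` one can
obtain an optimal character `f'` with `l_{f'}(T1) < l_{f'}(T2)` which is
monochromatic on every cherry of `T1`. -/
theorem optimal_monochromatic_cherries {X : Type} (T1 T2 : PTree X)
    (h1 : IsPhylo T1) (h2 : IsPhylo T2) (f : X → ℕ)
    (hopt : ((pscore f T1 : ℤ) - (pscore f T2 : ℤ)).natAbs = dMP T1 T2)
    (hlt : pscore f T1 < pscore f T2) :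
    ∃ f' : X → ℕ,
      ((pscore f' T1 : ℤ) - (pscore f' T2 : ℤ)).natAbs = dMP T1 T2 ∧
      pscore f' T1 < pscore f' T2 ∧
      ∀ a b : X, IsCherry T1 a b → f' a = f' b := by
  classical
  exact main_aux T1 T2 h1 h2 _ f le_rfl hopt hlt

end MPDist
end

section
/- For the rooted binary trees T_a = (((((2,3),4),5),6),1) and T_b = ((((2,6),(3,4)),5),1) on taxon set {1,…,6}: the maximum over all characters f of (l_f(T_b) − l_f(T_a)) equals 2, and the maximum over all characters f of (l_f(T_a) − l_f(T_b)) equals 1. Consequently d_MP(T_a,T_b) = 2, gap(T_a,T_b) = 1, and every optimal character f satisfies l_f(T_b) = l_f(T_a) + 2. -/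
namespace MPDist

section FitchAlg

variable {X C D : Type} [DecidableEq C] [DecidableEq D]

/-- The Fitch algorithm: bottom-up state sets and score. -/
def fitch (f : X → C) : PTree X → Finset C × ℕ
  | .leaf x => ({f x}, 0)
  | .node l r =>
      if ((fitch f l).1 ∩ (fitch f r).1).Nonempty then
        ((fitch f l).1 ∩ (fitch f r).1, (fitch f l).2 + (fitch f r).2)
      else ((fitch f l).1 ∪ (fitch f r).1, (fitch f l).2 + (fitch f r).2 + 1)

lemma fitch_nonempty (f : X → C) (T : PTree X) : (fitch f T).1.Nonempty := by
  induction T with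
  | leaf x => exact ⟨f x, by simp [fitch]⟩
  | node l r ihl ihr =>
    rw [fitch]
    split_ifs with h
    · exact h
    · obtain ⟨c, hc⟩ := ihl
      exact ⟨c, Finset.mem_union_left _ hc⟩

lemma changes_ge (f : X → C) {T : PTree X} {g : ETree C} (h : IsExtension f T g) :
    (fitch f T).2 + (if g.root ∈ (fitch f T).1 then 0 else 1) ≤ g.changes := by
  induction h with
  | leaf x => simp [fitch, ETree.root, ETree.changes]
  | @node l r gl gr c hl hr ihl ihr =>
    have key : ∀ (F : Finset C) (gc : ETree C) (n : ℕ),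
        n + (if gc.root ∈ F then 0 else 1) ≤ gc.changes →
        n + (if c ∈ F then 0 else 1) ≤ gc.changes + (if gc.root = c then 0 else 1) := by
      intro F gc n ih
      by_cases h1 : gc.root = c
      · rw [h1] at ih; split_ifs at ih ⊢ <;> omega
      · rw [if_neg h1]; split_ifs at ih ⊢ <;> omega
    have kl := key (fitch f l).1 gl (fitch f l).2 ihl
    have kr := key (fitch f r).1 gr (fitch f r).2 ihr
    have hch : (ETree.node c gl gr).changes =
        ((if gl.root = c then 0 else 1) + (if gr.root = c then 0 else 1)) +
          (gl.changes + gr.changes) := rfl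
    have hrt : (ETree.node c gl gr).root = c := rfl
    rw [hch, hrt, fitch]
    by_cases hI : ((fitch f l).1 ∩ (fitch f r).1).Nonempty
    · rw [if_pos hI]
      dsimp only
      have hm : (if c ∈ (fitch f l).1 ∩ (fitch f r).1 then 0 else 1) ≤
          (if c ∈ (fitch f l).1 then 0 else 1) + (if c ∈ (fitch f r).1 then (0:ℕ) else 1) := by
        by_cases h1 : c ∈ (fitch f l).1 <;> by_cases h2 : c ∈ (fitch f r).1 <;>
          simp [Finset.mem_inter, h1, h2]
      split_ifs at hm kl kr ⊢ <;> omega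
    · rw [if_neg hI]
      dsimp only
      have hm : 1 + (if c ∈ (fitch f l).1 ∪ (fitch f r).1 then 0 else 1) ≤
          (if c ∈ (fitch f l).1 then 0 else 1) + (if c ∈ (fitch f r).1 then (0:ℕ) else 1) := by
        by_cases h1 : c ∈ (fitch f l).1 <;> by_cases h2 : c ∈ (fitch f r).1
        · exact absurd ⟨c, Finset.mem_inter.2 ⟨h1, h2⟩⟩ hI
        all_goals simp [Finset.mem_union, h1, h2]
      split_ifs at hm kl kr ⊢ <;> omega

lemma fitch_achieve (f : X → C) (T : PTree X) :
    ∀ c ∈ (fitch f T).1, ∃ g : ETree C,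
      IsExtension f T g ∧ g.root = c ∧ g.changes = (fitch f T).2 := by
  induction T with
  | leaf x =>
    intro c hc
    simp only [fitch, Finset.mem_singleton] at hc
    subst hc
    exact ⟨.leaf (f x), .leaf x, rfl, rfl⟩
  | node l r ihl ihr =>
    intro c hc
    rw [fitch] at hc ⊢
    split_ifs at hc ⊢ with hI
    · obtain ⟨h1, h2⟩ := Finset.mem_inter.1 hc
      obtain ⟨gl, el, rl, cl⟩ := ihl c h1
      obtain ⟨gr, er, rr, cr⟩ := ihr c h2
      refine ⟨.node c gl gr, .node c el er, rfl, ?_⟩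
      show ((if gl.root = c then 0 else 1) + (if gr.root = c then 0 else 1)) +
          (gl.changes + gr.changes) = (fitch f l).2 + (fitch f r).2
      rw [rl, rr, cl, cr]
      simp
    · rcases Finset.mem_union.1 hc with h | h
      · obtain ⟨gl, el, rl, cl⟩ := ihl c h
        obtain ⟨d, hd⟩ := fitch_nonempty f r
        obtain ⟨gr, er, rr, cr⟩ := ihr d hd
        have hdc : gr.root ≠ c := by
          rw [rr]; rintro rfl; exact hI ⟨d, Finset.mem_inter.2 ⟨h, hd⟩⟩
        refine ⟨.node c gl gr, .node c el er, rfl, ?_⟩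
        show ((if gl.root = c then 0 else 1) + (if gr.root = c then 0 else 1)) +
            (gl.changes + gr.changes) = (fitch f l).2 + (fitch f r).2 + 1
        rw [rl, cl, cr]
        simp [hdc]
        omega
      · obtain ⟨gr, er, rr, cr⟩ := ihr c h
        obtain ⟨d, hd⟩ := fitch_nonempty f l
        obtain ⟨gl, el, rl, cl⟩ := ihl d hd
        have hdc : gl.root ≠ c := by
          rw [rl]; rintro rfl; exact hI ⟨d, Finset.mem_inter.2 ⟨hd, h⟩⟩
        refine ⟨.node c gl gr, .node c el er, rfl, ?_⟩
        show ((if gl.root = c then 0 else 1) + (if gr.root = c then 0 else 1)) +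
            (gl.changes + gr.changes) = (fitch f l).2 + (fitch f r).2 + 1
        rw [rr, cl, cr]
        simp [hdc]
        omega

lemma pscore_eq_fitch (f : X → C) (T : PTree X) : pscore f T = (fitch f T).2 := by
  obtain ⟨c, hc⟩ := fitch_nonempty f T
  obtain ⟨g, hg, _, hch⟩ := fitch_achieve f T c hc
  have hne : {k : ℕ | ∃ g' : ETree C, IsExtension f T g' ∧ g'.changes = k}.Nonempty :=
    ⟨g.changes, g, hg, rfl⟩
  rw [pscore]
  apply le_antisymm
  · exact Nat.sInf_le ⟨g, hg, hch⟩
  · refine le_csInf hne ?_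
    rintro k ⟨g', hg', rfl⟩
    exact le_trans (Nat.le_add_right _ _) (changes_ge f hg')

lemma fitch_congr {f f' : X → C} :
    ∀ T : PTree X, (∀ x ∈ T.leaves, f x = f' x) → fitch f T = fitch f' T := by
  intro T
  induction T with
  | leaf x => intro h; simp [fitch, h x (by simp [PTree.leaves])]
  | node l r ihl ihr =>
    intro h
    have hl := ihl (fun x hx => h x (by simp [PTree.leaves, hx]))
    have hr := ihr (fun x hx => h x (by simp [PTree.leaves, hx]))
    simp only [fitch, hl, hr]

lemma fitch_relabel (f : X → C) (σ : C → D) (S : Finset C) (hσ : Set.InjOn σ S) :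
    ∀ T : PTree X, (∀ x ∈ T.leaves, f x ∈ S) →
      (fitch f T).1 ⊆ S ∧ (fitch (fun x => σ (f x)) T).1 = (fitch f T).1.image σ ∧
        (fitch (fun x => σ (f x)) T).2 = (fitch f T).2 := by
  intro T
  induction T with
  | leaf x =>
    intro h
    refine ⟨?_, by simp [fitch], by simp [fitch]⟩
    intro c hc
    simp only [fitch, Finset.mem_singleton] at hc
    subst hc
    exact h x (by simp [PTree.leaves])
  | node l r ihl ihr =>
    intro h
    obtain ⟨sl, el, nl⟩ := ihl (fun x hx => h x (by simp [PTree.leaves, hx]))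
    obtain ⟨sr, er, nr⟩ := ihr (fun x hx => h x (by simp [PTree.leaves, hx]))
    have img : (fitch f l).1.image σ ∩ (fitch f r).1.image σ =
        ((fitch f l).1 ∩ (fitch f r).1).image σ := by
      ext d
      simp only [Finset.mem_inter, Finset.mem_image]
      constructor
      · rintro ⟨⟨a, ha, rfl⟩, ⟨b, hb, hab⟩⟩
        have hba : b = a := hσ (sr hb) (sl ha) hab
        exact ⟨a, ⟨ha, hba ▸ hb⟩, rfl⟩
      · rintro ⟨a, ⟨h1, h2⟩, rfl⟩
        exact ⟨⟨a, h1, rfl⟩, a, h2, rfl⟩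
    have hiff : (((fitch f l).1 ∩ (fitch f r).1).image σ).Nonempty ↔
        ((fitch f l).1 ∩ (fitch f r).1).Nonempty := Finset.image_nonempty
    simp only [fitch]
    rw [el, er, img]
    by_cases hI : ((fitch f l).1 ∩ (fitch f r).1).Nonempty
    · rw [if_pos (hiff.2 hI), if_pos hI, nl, nr]
      exact ⟨fun c hc => sl (Finset.mem_inter.1 hc).1, rfl, rfl⟩
    · rw [if_neg (fun hh => hI (hiff.1 hh)), if_neg hI, nl, nr]
      refine ⟨fun c hc => ?_, by rw [Finset.image_union], rfl⟩
      rcases Finset.mem_union.1 hc with h1 | h1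
      · exact sl h1
      · exact sr h1

end FitchAlg

/-- List-based Fitch (kernel-computation friendly). -/
def fitchL (f : ℕ → ℕ) : PTree ℕ → List ℕ × ℕ
  | .leaf x => ([f x], 0)
  | .node l r =>
      if ((fitchL f l).1.filter (fun c => decide (c ∈ (fitchL f r).1))).isEmpty then
        ((fitchL f l).1 ++ (fitchL f r).1, (fitchL f l).2 + (fitchL f r).2 + 1)
      else
        ((fitchL f l).1.filter (fun c => decide (c ∈ (fitchL f r).1)),
          (fitchL f l).2 + (fitchL f r).2)

lemma fitchL_eq (f : ℕ → ℕ) :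
    ∀ T : PTree ℕ, (fitchL f T).1.toFinset = (fitch f T).1 ∧ (fitchL f T).2 = (fitch f T).2 := by
  intro T
  induction T with
  | leaf x => constructor <;> simp [fitchL, fitch]
  | node l r ihl ihr =>
    obtain ⟨sl, nl⟩ := ihl
    obtain ⟨sr, nr⟩ := ihr
    have hfil : ((fitchL f l).1.filter (fun c => decide (c ∈ (fitchL f r).1))).toFinset =
        (fitch f l).1 ∩ (fitch f r).1 := by
      ext c
      simp only [List.mem_toFinset, List.mem_filter, decide_eq_true_iff, Finset.mem_inter,
        ← sl, ← sr, List.mem_toFinset]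
    have hemp : ((fitchL f l).1.filter (fun c => decide (c ∈ (fitchL f r).1))).isEmpty = true ↔
        ¬((fitch f l).1 ∩ (fitch f r).1).Nonempty := by
      rw [List.isEmpty_iff, Finset.not_nonempty_iff_eq_empty, ← hfil]
      constructor
      · intro h; rw [h]; rfl
      · intro h
        have := List.toFinset_eq_empty_iff _ |>.1 h
        exact this
    by_cases hI : ((fitch f l).1 ∩ (fitch f r).1).Nonempty
    · rw [fitchL, fitch, if_pos hI, if_neg (by rw [hemp]; exact fun h => h hI)]
      exact ⟨hfil, by rw [nl, nr]⟩
    · rw [fitchL, fitch, if_neg hI, if_pos (hemp.2 hI)]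
      refine ⟨?_, by rw [nl, nr]⟩
      rw [List.toFinset_append, sl, sr]

/-- Character on the first six naturals given by a list of states. -/
def chrL (l : List ℕ) : ℕ → ℕ := fun x => l.getD x 0

lemma indexOf_getElem_le' {α : Type} [DecidableEq α] :
    ∀ (l : List α) (i : ℕ) (h : i < l.length), l.idxOf l[i] ≤ i := by
  intro l
  induction l with
  | nil => intro i h; simp at h
  | cons a t ih =>
    intro i h
    cases i with
    | zero => simp
    | succ n =>
      have hn : n < t.length := by simpa using h
      have hg : (a :: t)[n + 1] = t[n]'hn := by simp
      rw [hg]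
      by_cases hd : t[n]'hn = a
      · rw [hd]
        simp
      · rw [List.idxOf_cons_ne _ (fun hh => hd hh.symm)]
        exact Nat.succ_le_succ (ih n hn)

lemma exists_canonical (f : ℕ → ℕ) :
    ∃ b c d e g : ℕ, b ≤ 1 ∧ c ≤ 2 ∧ d ≤ 3 ∧ e ≤ 4 ∧ g ≤ 5 ∧
      (fitch (chrL [0, b, c, d, e, g]) Ta6).2 = (fitch f Ta6).2 ∧
      (fitch (chrL [0, b, c, d, e, g]) Tb6).2 = (fitch f Tb6).2 := by
  set vals : List ℕ := [f 0, f 1, f 2, f 3, f 4, f 5] with hvals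
  have hmem : ∀ i : ℕ, i < 6 → f i ∈ vals := by
    intro i hi
    interval_cases i <;> simp [hvals]
  have hle : ∀ i : ℕ, i < 6 → vals.idxOf (f i) ≤ i := by
    intro i hi
    have h6 : i < vals.length := by simp [hvals]; omega
    have hg : vals[i] = f i := by
      interval_cases i <;> simp [hvals]
    have := indexOf_getElem_le' vals i h6
    rwa [hg] at this
  have hinj : Set.InjOn (fun c => vals.idxOf c) (vals.toFinset : Finset ℕ) := by
    intro a ha b hb hab
    simp only [Finset.mem_coe, List.mem_toFinset] at ha hb
    have ha' := List.idxOf_lt_length_iff.2 ha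
    have hb' := List.idxOf_lt_length_iff.2 hb
    have : vals[vals.idxOf a] = vals[vals.idxOf b] := by congr 1
    rwa [List.getElem_idxOf ha', List.getElem_idxOf hb'] at this
  have hzero : vals.idxOf (f 0) = 0 := by
    rw [hvals]
    exact List.idxOf_cons_self
  have hagree : ∀ x : ℕ, x < 6 →
      chrL [0, vals.idxOf (f 1), vals.idxOf (f 2), vals.idxOf (f 3),
        vals.idxOf (f 4), vals.idxOf (f 5)] x = vals.idxOf (f x) := by
    intro x hx
    interval_cases x <;> simp [chrL, hzero]
  refine ⟨vals.idxOf (f 1), vals.idxOf (f 2), vals.idxOf (f 3), vals.idxOf (f 4),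
    vals.idxOf (f 5), hle 1 (by omega), hle 2 (by omega), hle 3 (by omega),
    hle 4 (by omega), hle 5 (by omega), ?_, ?_⟩
  · have hl : ∀ x ∈ Ta6.leaves, f x ∈ (vals.toFinset : Finset ℕ) := by
      intro x hx
      have hx6 : x < 6 := by
        simp [Ta6, PTree.leaves] at hx
        omega
      exact List.mem_toFinset.2 (hmem x hx6)
    have hrel := (fitch_relabel f (fun c => vals.idxOf c) vals.toFinset hinj Ta6 hl).2.2
    rw [← hrel]
    apply congrArg
    apply fitch_congr
    intro x hx
    have hx6 : x < 6 := by
      simp [Ta6, PTree.leaves] at hx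
      omega
    exact hagree x hx6
  · have hl : ∀ x ∈ Tb6.leaves, f x ∈ (vals.toFinset : Finset ℕ) := by
      intro x hx
      have hx6 : x < 6 := by
        simp [Tb6, PTree.leaves] at hx
        omega
      exact List.mem_toFinset.2 (hmem x hx6)
    have hrel := (fitch_relabel f (fun c => vals.idxOf c) vals.toFinset hinj Tb6 hl).2.2
    rw [← hrel]
    apply congrArg
    apply fitch_congr
    intro x hx
    have hx6 : x < 6 := by
      simp [Tb6, PTree.leaves] at hx
      omega
    exact hagree x hx6

set_option maxRecDepth 20000 in
lemma core6 : ∀ b ∈ [0, 1], ∀ c ∈ [0, 1, 2], ∀ d ∈ [0, 1, 2, 3], ∀ e ∈ [0, 1, 2, 3, 4],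
    ∀ g ∈ [0, 1, 2, 3, 4, 5],
    (fitchL (chrL [0, b, c, d, e, g]) Tb6).2 ≤ (fitchL (chrL [0, b, c, d, e, g]) Ta6).2 + 2 ∧
    (fitchL (chrL [0, b, c, d, e, g]) Ta6).2 ≤ (fitchL (chrL [0, b, c, d, e, g]) Tb6).2 + 1 := by
  decide

lemma mem_range_le {n k : ℕ} (h : k ≤ n) : k ∈ (List.range (n + 1)) := by
  simpa using by omega

lemma bounds6 (f : ℕ → ℕ) :
    pscore f Tb6 ≤ pscore f Ta6 + 2 ∧ pscore f Ta6 ≤ pscore f Tb6 + 1 := by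
  obtain ⟨b, c, d, e, g, hb, hc, hd, he, hg, ha6, hb6⟩ := exists_canonical f
  have hbm : b ∈ [0, 1] := by interval_cases b <;> simp
  have hcm : c ∈ [0, 1, 2] := by interval_cases c <;> simp
  have hdm : d ∈ [0, 1, 2, 3] := by interval_cases d <;> simp
  have hem : e ∈ [0, 1, 2, 3, 4] := by interval_cases e <;> simp
  have hgm : g ∈ [0, 1, 2, 3, 4, 5] := by interval_cases g <;> simp
  have hcore := core6 b hbm c hcm d hdm e hem g hgm
  have ea := (fitchL_eq (chrL [0, b, c, d, e, g]) Ta6).2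
  have eb := (fitchL_eq (chrL [0, b, c, d, e, g]) Tb6).2
  rw [pscore_eq_fitch, pscore_eq_fitch, ← ha6, ← hb6, ← ea, ← eb]
  exact hcore

lemma bound_ab (f : ℕ → ℕ) : pscore f Tb6 ≤ pscore f Ta6 + 2 := (bounds6 f).1

lemma bound_ba (f : ℕ → ℕ) : pscore f Ta6 ≤ pscore f Tb6 + 1 := (bounds6 f).2

/-- witness for max (l(Tb)-l(Ta)) = 2 -/
def fw1 : ℕ → ℕ := fun x => [0, 1, 1, 2, 2, 0].getD x 0

/-- witness for max (l(Ta)-l(Tb)) = 1 -/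
def fw2 : ℕ → ℕ := fun x => [0, 0, 1, 1, 0, 0].getD x 0


set_option maxRecDepth 20000 in
lemma fw1_pa : pscore fw1 Ta6 = 2 := by
  rw [pscore_eq_fitch, ← (fitchL_eq fw1 Ta6).2]; decide
set_option maxRecDepth 20000 in
lemma fw1_pb : pscore fw1 Tb6 = 4 := by
  rw [pscore_eq_fitch, ← (fitchL_eq fw1 Tb6).2]; decide
set_option maxRecDepth 20000 in
lemma fw2_pa : pscore fw2 Ta6 = 2 := by
  rw [pscore_eq_fitch, ← (fitchL_eq fw2 Ta6).2]; decide
set_option maxRecDepth 20000 in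
lemma fw2_pb : pscore fw2 Tb6 = 1 := by
  rw [pscore_eq_fitch, ← (fitchL_eq fw2 Tb6).2]; decide

/-- for `T_a = (((((2,3),4),5),6),1)` and `T_b = ((((2,6),(3,4)),5),1)`:
`max_f (l_f(T_b) − l_f(T_a)) = 2`, `max_f (l_f(T_a) − l_f(T_b)) = 1`, hence
`d_MP(T_a,T_b) = 2`, `gap(T_a,T_b) = 1`, and every optimal character `f`
satisfies `l_f(T_b) = l_f(T_a) + 2`. -/
theorem Ta6_Tb6_asymmetric :
    maxDiff Ta6 Tb6 = 2 ∧
    maxDiff Tb6 Ta6 = 1 ∧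
    dMP Ta6 Tb6 = 2 ∧
    gap Ta6 Tb6 = 1 ∧
    (∀ f : ℕ → ℕ,
      ((pscore f Ta6 : ℤ) - (pscore f Tb6 : ℤ)).natAbs = dMP Ta6 Tb6 →
      (pscore f Tb6 : ℤ) = (pscore f Ta6 : ℤ) + 2) := by
  have hm1 : maxDiff Ta6 Tb6 = 2 := by
    have hmem : (2 : ℤ) ∈ {d : ℤ | ∃ f : ℕ → ℕ, d = (pscore f Tb6 : ℤ) - (pscore f Ta6 : ℤ)} :=
      ⟨fw1, by rw [fw1_pa, fw1_pb]; norm_num⟩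
    have hub : ∀ d ∈ {d : ℤ | ∃ f : ℕ → ℕ, d = (pscore f Tb6 : ℤ) - (pscore f Ta6 : ℤ)},
        d ≤ 2 := by
      rintro d ⟨f, rfl⟩
      have := bound_ab f
      omega
    exact le_antisymm (csSup_le ⟨2, hmem⟩ hub) (le_csSup ⟨2, fun d hd => hub d hd⟩ hmem)
  have hm2 : maxDiff Tb6 Ta6 = 1 := by
    have hmem : (1 : ℤ) ∈ {d : ℤ | ∃ f : ℕ → ℕ, d = (pscore f Ta6 : ℤ) - (pscore f Tb6 : ℤ)} :=
      ⟨fw2, by rw [fw2_pa, fw2_pb]; norm_num⟩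
    have hub : ∀ d ∈ {d : ℤ | ∃ f : ℕ → ℕ, d = (pscore f Ta6 : ℤ) - (pscore f Tb6 : ℤ)},
        d ≤ 1 := by
      rintro d ⟨f, rfl⟩
      have := bound_ba f
      omega
    exact le_antisymm (csSup_le ⟨1, hmem⟩ hub) (le_csSup ⟨1, fun d hd => hub d hd⟩ hmem)
  have hd : dMP Ta6 Tb6 = 2 := by
    have hmem : (2 : ℕ) ∈
        {k : ℕ | ∃ f : ℕ → ℕ, k = ((pscore f Ta6 : ℤ) - (pscore f Tb6 : ℤ)).natAbs} :=
      ⟨fw1, by rw [fw1_pa, fw1_pb]; norm_num⟩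
    have hub : ∀ k ∈ {k : ℕ | ∃ f : ℕ → ℕ,
        k = ((pscore f Ta6 : ℤ) - (pscore f Tb6 : ℤ)).natAbs}, k ≤ 2 := by
      rintro k ⟨f, rfl⟩
      have h1 := bound_ab f
      have h2 := bound_ba f
      omega
    exact le_antisymm (csSup_le ⟨2, hmem⟩ hub) (le_csSup ⟨2, fun d hd => hub d hd⟩ hmem)
  refine ⟨hm1, hm2, hd, ?_, ?_⟩
  · rw [gap, hm1, hm2]
    norm_num
  · intro f hf
    rw [hd] at hf
    have h1 := bound_ab f
    have h2 := bound_ba f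
    omega


end MPDist
end

section
/- For every integer k ≥ 1, gap(T^k_A, T^k_B) ≥ k + 1. -/
namespace MPDist

section Cost
variable {X C : Type} [DecidableEq C] [Nonempty C]

noncomputable def hcost (f : X → C) : PTree X → C → ℕ
  | .leaf x => fun c => if f x = c then 0 else 1
  | .node l r => fun c =>
      min (hcost f l c + hcost f r c)
        (sInf (Set.range fun c' => hcost f l c' + hcost f r c') + 1)

noncomputable def mcost (f : X → C) (T : PTree X) : ℕ := sInf (Set.range (hcost f T))

def minset (f : X → C) (T : PTree X) : Set C := {c | hcost f T c = mcost f T}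

lemma mcost_le_hcost (f : X → C) (T : PTree X) (c : C) : mcost f T ≤ hcost f T c :=
  Nat.sInf_le ⟨c, rfl⟩

lemma minset_nonempty (f : X → C) (T : PTree X) : (minset f T).Nonempty := by
  obtain ⟨c, hc⟩ := Nat.sInf_mem (Set.range_nonempty (hcost f T))
  exact ⟨c, hc⟩

lemma mcost_node_eq_inner (f : X → C) (l r : PTree X) :
    mcost f (.node l r) = sInf (Set.range fun c' => hcost f l c' + hcost f r c') := by
  set I := sInf (Set.range fun c' => hcost f l c' + hcost f r c') with hI
  apply le_antisymm
  · obtain ⟨c0, hc0⟩ := Nat.sInf_mem (Set.range_nonempty (fun c' => hcost f l c' + hcost f r c'))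
    have hc0' : hcost f l c0 + hcost f r c0 = I := hc0
    refine le_trans (mcost_le_hcost f _ c0) ?_
    show min (hcost f l c0 + hcost f r c0) (I + 1) ≤ I
    rw [hc0']; omega
  · refine le_csInf (Set.range_nonempty _) ?_
    rintro b ⟨c, rfl⟩
    show I ≤ min (hcost f l c + hcost f r c) (I + 1)
    have : I ≤ hcost f l c + hcost f r c := Nat.sInf_le ⟨c, rfl⟩
    omega

lemma hcost_le_mcost_add_one (f : X → C) (T : PTree X) (c : C) :
    hcost f T c ≤ mcost f T + 1 := by
  cases T with
  | leaf x => show (if f x = c then 0 else 1) ≤ _ ; split <;> omega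
  | node l r =>
      rw [mcost_node_eq_inner]
      exact min_le_right _ _

lemma hcost_lipschitz (f : X → C) (T : PTree X) (c c' : C) :
    hcost f T c ≤ hcost f T c' + 1 :=
  le_trans (hcost_le_mcost_add_one f T c) (by have := mcost_le_hcost f T c'; omega)

lemma mcost_node_ge (f : X → C) (l r : PTree X) :
    mcost f l + mcost f r ≤ mcost f (.node l r) := by
  rw [mcost_node_eq_inner]
  refine le_csInf (Set.range_nonempty _) ?_
  rintro b ⟨c, rfl⟩
  exact add_le_add (mcost_le_hcost f l c) (mcost_le_hcost f r c)

lemma mcost_node_le (f : X → C) (l r : PTree X) :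
    mcost f (.node l r) ≤ mcost f l + mcost f r + 1 := by
  rw [mcost_node_eq_inner]
  obtain ⟨c0, hc0⟩ := minset_nonempty f l
  refine le_trans (Nat.sInf_le ⟨c0, rfl⟩) ?_
  show hcost f l c0 + hcost f r c0 ≤ _
  have h1 : hcost f l c0 = mcost f l := hc0
  have h2 := hcost_le_mcost_add_one f r c0
  omega

lemma mcost_node_inter (f : X → C) (l r : PTree X)
    (h : (minset f l ∩ minset f r).Nonempty) :
    mcost f (.node l r) = mcost f l + mcost f r := by
  rw [mcost_node_eq_inner]
  apply le_antisymm
  · obtain ⟨c0, h1, h2⟩ := h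
    refine le_trans (Nat.sInf_le ⟨c0, rfl⟩) ?_
    show hcost f l c0 + hcost f r c0 ≤ _
    rw [show hcost f l c0 = mcost f l from h1, show hcost f r c0 = mcost f r from h2]
  · refine le_csInf (Set.range_nonempty _) ?_
    rintro b ⟨c, rfl⟩
    exact add_le_add (mcost_le_hcost f l c) (mcost_le_hcost f r c)

lemma minset_node_inter (f : X → C) (l r : PTree X)
    (h : (minset f l ∩ minset f r).Nonempty) :
    minset f (.node l r) = minset f l ∩ minset f r := by
  have hm := mcost_node_inter f l r h
  ext c
  have hl1 := mcost_le_hcost f l c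
  have hr1 := mcost_le_hcost f r c
  have hin : mcost f (.node l r) = sInf (Set.range fun c' => hcost f l c' + hcost f r c') :=
    mcost_node_eq_inner f l r
  constructor
  · intro hc
    have hc' : hcost f (.node l r) c = mcost f (.node l r) := hc
    have : min (hcost f l c + hcost f r c) (sInf (Set.range fun c' => hcost f l c' + hcost f r c') + 1)
        = mcost f (.node l r) := hc'
    rw [← hin] at this
    have hsum : hcost f l c + hcost f r c = mcost f l + mcost f r := by
      rw [hm] at this; omega
    constructor
    · show hcost f l c = mcost f l ; omega
    · show hcost f r c = mcost f r ; omega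
  · rintro ⟨h1, h2⟩
    show min (hcost f l c + hcost f r c) _ = mcost f (.node l r)
    rw [show hcost f l c = mcost f l from h1, show hcost f r c = mcost f r from h2,
      hm, ← hin, hm]
    omega

lemma mcost_node_empty (f : X → C) (l r : PTree X)
    (h : ¬ (minset f l ∩ minset f r).Nonempty) :
    mcost f (.node l r) = mcost f l + mcost f r + 1 := by
  rw [mcost_node_eq_inner]
  apply le_antisymm
  · obtain ⟨c0, hc0⟩ := minset_nonempty f l
    have hle : sInf (Set.range fun c' => hcost f l c' + hcost f r c') ≤ hcost f l c0 + hcost f r c0 :=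
      Nat.sInf_le ⟨c0, rfl⟩
    have h1 : hcost f l c0 = mcost f l := hc0
    have h2 := hcost_le_mcost_add_one f r c0
    omega
  · refine le_csInf (Set.range_nonempty _) ?_
    rintro b ⟨c, rfl⟩
    show mcost f l + mcost f r + 1 ≤ hcost f l c + hcost f r c
    have hl1 := mcost_le_hcost f l c
    have hr1 := mcost_le_hcost f r c
    by_cases h1 : hcost f l c = mcost f l
    · by_cases h2 : hcost f r c = mcost f r
      · exact absurd ⟨c, h1, h2⟩ h
      · omega
    · omega

lemma minset_node_empty (f : X → C) (l r : PTree X)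
    (h : ¬ (minset f l ∩ minset f r).Nonempty) :
    minset f (.node l r) = minset f l ∪ minset f r := by
  have hm := mcost_node_empty f l r h
  have hin : mcost f (.node l r) = sInf (Set.range fun c' => hcost f l c' + hcost f r c') :=
    mcost_node_eq_inner f l r
  ext c
  have hl1 := mcost_le_hcost f l c
  have hr1 := mcost_le_hcost f r c
  have hl2 := hcost_le_mcost_add_one f l c
  have hr2 := hcost_le_mcost_add_one f r c
  have hnboth : ¬ (hcost f l c = mcost f l ∧ hcost f r c = mcost f r) := by
    rintro ⟨h1, h2⟩; exact h ⟨c, h1, h2⟩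
  constructor
  · intro hc
    have : min (hcost f l c + hcost f r c) _ = mcost f (.node l r) := hc
    rw [← hin, hm] at this
    have hsum : hcost f l c + hcost f r c = mcost f l + mcost f r + 1 := by omega
    by_cases h1 : hcost f l c = mcost f l
    · exact Or.inl h1
    · right; show hcost f r c = mcost f r ; omega
  · intro hc
    show min (hcost f l c + hcost f r c) _ = mcost f (.node l r)
    have hsum : hcost f l c + hcost f r c = mcost f l + mcost f r + 1 := by
      rcases hc with h1 | h1
      · have : hcost f l c = mcost f l := h1
        have : ¬ hcost f r c = mcost f r := fun h2 => hnboth ⟨h1, h2⟩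
        omega
      · have : hcost f r c = mcost f r := h1
        have : ¬ hcost f l c = mcost f l := fun h2 => hnboth ⟨h2, h1⟩
        omega
    rw [← hin, hm]
    omega

end Cost

section ExtCost
variable {X C : Type} [DecidableEq C] [Nonempty C]

lemma changes_node {C : Type} [DecidableEq C] (c : C) (gl gr : ETree C) :
    (ETree.node c gl gr).changes =
      ((if gl.root = c then 0 else 1) + (if gr.root = c then 0 else 1)) +
        (gl.changes + gr.changes) := rfl

lemma root_node {C : Type} (c : C) (gl gr : ETree C) :
    (ETree.node c gl gr).root = c := rfl

lemma ext_lower {f : X → C} {T : PTree X} {g : ETree C}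
    (h : IsExtension f T g) : hcost f T g.root ≤ g.changes := by
  induction h with
  | leaf x => simp [hcost, ETree.root, ETree.changes]
  | node c hl hr ihl ihr =>
      rename_i l r gl gr
      rw [root_node, changes_node]
      have h3 : hcost f (.node l r) c ≤ hcost f l c + hcost f r c := min_le_left _ _
      have h1 : hcost f l c ≤ gl.changes + (if gl.root = c then 0 else 1) := by
        by_cases e : gl.root = c
        · rw [if_pos e, ← e]; omega
        · rw [if_neg e]
          have := hcost_lipschitz f l c gl.root
          omega
      have h2 : hcost f r c ≤ gr.changes + (if gr.root = c then 0 else 1) := by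
        by_cases e : gr.root = c
        · rw [if_pos e, ← e]; omega
        · rw [if_neg e]
          have := hcost_lipschitz f r c gr.root
          omega
      by_cases e1 : gl.root = c <;> by_cases e2 : gr.root = c <;>
        simp only [e1, e2, if_pos, if_neg, if_true, if_false] at h1 h2 ⊢ <;> omega

lemma ext_ach (f : X → C) (T : PTree X) (c : C) :
    ∃ g : ETree C, IsExtension f T g ∧
      g.changes + (if g.root = c then 0 else 1) ≤ hcost f T c := by
  induction T generalizing c with
  | leaf x =>
      refine ⟨.leaf (f x), IsExtension.leaf x, ?_⟩
      show 0 + (if f x = c then 0 else 1) ≤ if f x = c then 0 else 1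
      omega
  | node l r ihl ihr =>
      set I := sInf (Set.range fun c' => hcost f l c' + hcost f r c') with hI
      have hnode : ∀ d, hcost f (.node l r) d = min (hcost f l d + hcost f r d) (I + 1) :=
        fun d => rfl
      by_cases hcase : hcost f l c + hcost f r c ≤ I + 1
      · obtain ⟨gl, el, hl⟩ := ihl c
        obtain ⟨gr, er, hr⟩ := ihr c
        refine ⟨.node c gl gr, IsExtension.node c el er, ?_⟩
        rw [changes_node, root_node, if_pos rfl, hnode c, min_eq_left hcase]
        by_cases e1 : gl.root = c <;> by_cases e2 : gr.root = c <;>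
          simp only [e1, e2, if_pos, if_neg, if_true, if_false] at hl hr ⊢ <;> omega
      · obtain ⟨c0, hc0⟩ := Nat.sInf_mem (Set.range_nonempty (fun c' => hcost f l c' + hcost f r c'))
        have hc0' : hcost f l c0 + hcost f r c0 = I := hc0
        obtain ⟨gl, el, hl⟩ := ihl c0
        obtain ⟨gr, er, hr⟩ := ihr c0
        refine ⟨.node c0 gl gr, IsExtension.node c0 el er, ?_⟩
        rw [changes_node, root_node, hnode c, min_eq_right (by omega)]
        have hb : (if c0 = c then (0:ℕ) else 1) ≤ 1 := by split <;> omega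
        by_cases e1 : gl.root = c0 <;> by_cases e2 : gr.root = c0 <;>
          simp only [e1, e2, if_pos, if_neg, if_true, if_false] at hl hr ⊢ <;> omega

lemma pscore_eq_mcost (f : X → C) (T : PTree X) : pscore f T = mcost f T := by
  obtain ⟨c0, hc0⟩ := minset_nonempty f T
  obtain ⟨g, eg, hg⟩ := ext_ach f T c0
  apply le_antisymm
  · refine le_trans (Nat.sInf_le ⟨g, eg, rfl⟩) ?_
    have : hcost f T c0 = mcost f T := hc0
    omega
  · refine le_csInf ⟨g.changes, g, eg, rfl⟩ ?_
    rintro b ⟨g', e', rfl⟩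
    exact le_trans (mcost_le_hcost f T g'.root) (ext_lower e')

end ExtCost

section Congr
variable {X Y C C' : Type} [DecidableEq C] [Nonempty C]

lemma hcost_congr {f₁ f₂ : X → C} : ∀ {T : PTree X},
    (∀ x ∈ T.leaves, f₁ x = f₂ x) → hcost f₁ T = hcost f₂ T := by
  intro T
  induction T with
  | leaf x =>
      intro h; funext c
      have hx : f₁ x = f₂ x := h x (by simp [PTree.leaves])
      simp [hcost, hx]
  | node l r ihl ihr =>
      intro h
      have hl : ∀ x ∈ l.leaves, f₁ x = f₂ x := fun x hx => h x (by simp [PTree.leaves, hx])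
      have hr : ∀ x ∈ r.leaves, f₁ x = f₂ x := fun x hx => h x (by simp [PTree.leaves, hx])
      funext c
      simp [hcost, ihl hl, ihr hr]

lemma mcost_congr {f₁ f₂ : X → C} {T : PTree X}
    (h : ∀ x ∈ T.leaves, f₁ x = f₂ x) : mcost f₁ T = mcost f₂ T := by
  unfold mcost; rw [hcost_congr h]

lemma hcost_map (f : X → C) (φ : Y → X) : ∀ T : PTree Y,
    hcost f (T.map φ) = hcost (f ∘ φ) T := by
  intro T
  induction T with
  | leaf x => funext c; simp [PTree.map, hcost, Function.comp]
  | node l r ihl ihr => funext c; simp [PTree.map, hcost, ihl, ihr]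

lemma mcost_map (f : X → C) (φ : Y → X) (T : PTree Y) :
    mcost f (T.map φ) = mcost (f ∘ φ) T := by
  unfold mcost; rw [hcost_map]

lemma minset_map (f : X → C) (φ : Y → X) (T : PTree Y) :
    minset f (T.map φ) = minset (f ∘ φ) T := by
  unfold minset; rw [hcost_map, mcost_map]

end Congr

section Transfer
variable {X C C' : Type} [DecidableEq C] [Nonempty C] [DecidableEq C'] [Nonempty C']

lemma range_eq_of {ι : C → C'} {cfr : C} (g' : C' → ℕ) (g : C → ℕ)
    (h1 : ∀ c, g' (ι c) = g c) (h2 : ∀ d, (∀ c, ι c ≠ d) → g' d = g cfr) :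
    Set.range g' = Set.range g := by
  ext k
  constructor
  · rintro ⟨d, rfl⟩
    by_cases hd : ∃ c, ι c = d
    · obtain ⟨c, rfl⟩ := hd; exact ⟨c, (h1 c).symm⟩
    · push_neg at hd
      exact ⟨cfr, (h2 d hd).symm⟩
  · rintro ⟨c, rfl⟩
    exact ⟨ι c, h1 c⟩

lemma hcost_transfer {ι : C → C'} (hι : Function.Injective ι) (f : X → C) (cfr : C) :
    ∀ T : PTree X, (∀ x ∈ T.leaves, f x ≠ cfr) →
      (∀ c, hcost (fun x => ι (f x)) T (ι c) = hcost f T c) ∧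
      (∀ d, (∀ c, ι c ≠ d) → hcost (fun x => ι (f x)) T d = hcost f T cfr) := by
  intro T
  induction T with
  | leaf x =>
      intro hfr
      constructor
      · intro c
        show (if ι (f x) = ι c then 0 else 1) = (if f x = c then 0 else 1)
        simp [hι.eq_iff]
      · intro d hd
        show (if ι (f x) = d then 0 else 1) = (if f x = cfr then 0 else 1)
        rw [if_neg (hd (f x)), if_neg (hfr x (by simp [PTree.leaves]))]
  | node l r ihl ihr =>
      intro hfr
      have hfl : ∀ x ∈ l.leaves, f x ≠ cfr := fun x hx => hfr x (by simp [PTree.leaves, hx])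
      have hfr' : ∀ x ∈ r.leaves, f x ≠ cfr := fun x hx => hfr x (by simp [PTree.leaves, hx])
      obtain ⟨il1, il2⟩ := ihl hfl
      obtain ⟨ir1, ir2⟩ := ihr hfr'
      have hrange : Set.range (fun d => hcost (fun x => ι (f x)) l d + hcost (fun x => ι (f x)) r d)
          = Set.range (fun c => hcost f l c + hcost f r c) := by
        refine range_eq_of (ι := ι) (cfr := cfr) _ _ ?_ ?_
        · intro c
          show hcost _ l (ι c) + hcost _ r (ι c) = hcost f l c + hcost f r c
          rw [il1, ir1]
        · intro d hd
          show hcost _ l d + hcost _ r d = hcost f l cfr + hcost f r cfr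
          rw [il2 d hd, ir2 d hd]
      constructor
      · intro c
        show min _ _ = min _ _
        rw [hrange, il1, ir1]
      · intro d hd
        show min _ _ = min _ _
        rw [hrange, il2 d hd, ir2 d hd]

lemma mcost_transfer {ι : C → C'} (hι : Function.Injective ι) (f : X → C) (cfr : C)
    (T : PTree X) (hfr : ∀ x ∈ T.leaves, f x ≠ cfr) :
    mcost (fun x => ι (f x)) T = mcost f T := by
  obtain ⟨h1, h2⟩ := hcost_transfer hι f cfr T hfr
  unfold mcost
  rw [range_eq_of (cfr := cfr) _ _ h1 h2]

end Transfer

section HL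

def minf (w : Fin 7 → ℕ) : ℕ :=
  min (w 0) (min (w 1) (min (w 2) (min (w 3) (min (w 4) (min (w 5) (w 6))))))

lemma minf_le (w : Fin 7 → ℕ) (i : Fin 7) : minf w ≤ w i := by
  have b0 : minf w ≤ w 0 := min_le_left _ _
  have m1 : minf w ≤ min (w 1) (min (w 2) (min (w 3) (min (w 4) (min (w 5) (w 6))))) :=
    min_le_right _ _
  have b1 : minf w ≤ w 1 := le_trans m1 (min_le_left _ _)
  have m2 : minf w ≤ min (w 2) (min (w 3) (min (w 4) (min (w 5) (w 6)))) :=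
    le_trans m1 (min_le_right _ _)
  have b2 : minf w ≤ w 2 := le_trans m2 (min_le_left _ _)
  have m3 : minf w ≤ min (w 3) (min (w 4) (min (w 5) (w 6))) :=
    le_trans m2 (min_le_right _ _)
  have b3 : minf w ≤ w 3 := le_trans m3 (min_le_left _ _)
  have m4 : minf w ≤ min (w 4) (min (w 5) (w 6)) := le_trans m3 (min_le_right _ _)
  have b4 : minf w ≤ w 4 := le_trans m4 (min_le_left _ _)
  have m5 : minf w ≤ min (w 5) (w 6) := le_trans m4 (min_le_right _ _)
  have b5 : minf w ≤ w 5 := le_trans m5 (min_le_left _ _)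
  have b6 : minf w ≤ w 6 := le_trans m5 (min_le_right _ _)
  fin_cases i <;> assumption

lemma minf_mem (w : Fin 7 → ℕ) : ∃ i, minf w = w i := by
  have e6 : ∃ i, min (w 5) (w 6) = w i := by
    rcases min_choice (w 5) (w 6) with h | h
    exacts [⟨5, h⟩, ⟨6, h⟩]
  have e5 : ∃ i, min (w 4) (min (w 5) (w 6)) = w i := by
    rcases min_choice (w 4) (min (w 5) (w 6)) with h | h
    · exact ⟨4, h⟩
    · obtain ⟨i, hi⟩ := e6; exact ⟨i, h.trans hi⟩
  have e4 : ∃ i, min (w 3) (min (w 4) (min (w 5) (w 6))) = w i := by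
    rcases min_choice (w 3) (min (w 4) (min (w 5) (w 6))) with h | h
    · exact ⟨3, h⟩
    · obtain ⟨i, hi⟩ := e5; exact ⟨i, h.trans hi⟩
  have e3 : ∃ i, min (w 2) (min (w 3) (min (w 4) (min (w 5) (w 6)))) = w i := by
    rcases min_choice (w 2) _ with h | h
    · exact ⟨2, h⟩
    · obtain ⟨i, hi⟩ := e4; exact ⟨i, h.trans hi⟩
  have e2 : ∃ i, min (w 1) (min (w 2) (min (w 3) (min (w 4) (min (w 5) (w 6))))) = w i := by
    rcases min_choice (w 1) _ with h | h
    · exact ⟨1, h⟩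
    · obtain ⟨i, hi⟩ := e3; exact ⟨i, h.trans hi⟩
  rcases min_choice (w 0) (min (w 1) (min (w 2) (min (w 3) (min (w 4) (min (w 5) (w 6)))))) with h | h
  · exact ⟨0, h⟩
  · obtain ⟨i, hi⟩ := e2; exact ⟨i, h.trans hi⟩

lemma minf_eq_sInf (w : Fin 7 → ℕ) : minf w = sInf (Set.range w) := by
  apply le_antisymm
  · obtain ⟨i, hi⟩ := Nat.sInf_mem (Set.range_nonempty w)
    have : w i = sInf (Set.range w) := hi
    rw [← this]
    exact minf_le w i
  · obtain ⟨i, hi⟩ := minf_mem w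
    rw [hi]
    exact Nat.sInf_le ⟨i, rfl⟩

def hL {X : Type} (f : X → Fin 7) : PTree X → Fin 7 → ℕ
  | .leaf x => fun c => if f x = c then 0 else 1
  | .node l r => fun c =>
      min (hL f l c + hL f r c) (minf (fun c' => hL f l c' + hL f r c') + 1)

def mL {X : Type} (f : X → Fin 7) (T : PTree X) : ℕ := minf (hL f T)

lemma hL_eq_hcost {X : Type} (f : X → Fin 7) : ∀ T : PTree X, hL f T = hcost f T := by
  intro T
  induction T with
  | leaf x => rfl
  | node l r ihl ihr =>
      funext c
      show min _ _ = min _ _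
      rw [ihl, ihr, minf_eq_sInf]

lemma mL_eq_mcost {X : Type} (f : X → Fin 7) (T : PTree X) : mL f T = mcost f T := by
  unfold mL mcost
  rw [hL_eq_hcost, minf_eq_sInf]

end HL

section Cano

def cano : List ℕ → List ℕ → List ℕ
  | [], _ => []
  | a :: L, acc => acc.idxOf a :: cano L (if a ∈ acc then acc else acc ++ [a])

def accF : List ℕ → List ℕ → List ℕ
  | [], acc => acc
  | a :: L, acc => accF L (if a ∈ acc then acc else acc ++ [a])

def ctuples : ℕ → ℕ → List (List ℕ)
  | 0, _ => [[]]
  | n+1, m => (List.range (m+1)).flatMap fun v => (ctuples n (max m (v+1))).map (v :: ·)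

lemma accF_prefix : ∀ (L acc : List ℕ), acc <+: accF L acc := by
  intro L
  induction L with
  | nil => intro acc; exact List.prefix_refl acc
  | cons a L ih =>
      intro acc
      show acc <+: accF L (if a ∈ acc then acc else acc ++ [a])
      refine List.IsPrefix.trans ?_ (ih _)
      split
      · exact List.prefix_refl acc
      · exact ⟨[a], rfl⟩

lemma accF_nodup : ∀ (L acc : List ℕ), acc.Nodup → (accF L acc).Nodup := by
  intro L
  induction L with
  | nil => intro acc h; exact h
  | cons a L ih =>
      intro acc h
      apply ih
      split
      · exact h
      · next hmem => simp [List.nodup_append, h, hmem]; exact fun b hb e => hmem (e ▸ hb)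

lemma accF_length_le : ∀ (L acc : List ℕ), (accF L acc).length ≤ acc.length + L.length := by
  intro L
  induction L with
  | nil => intro acc; simp [accF]
  | cons a L ih =>
      intro acc
      show (accF L (if a ∈ acc then acc else acc ++ [a])).length ≤ _
      refine le_trans (ih _) ?_
      split <;> simp <;> omega

lemma getD_of_prefix {l big : List ℕ} (h : l <+: big) {j : ℕ} (hj : j < l.length) :
    big.getD j 0 = l.getD j 0 := by
  obtain ⟨t, rfl⟩ := h
  rw [List.getD_append _ _ _ _ hj]

lemma cano_spec : ∀ (L acc : List ℕ) (j : ℕ), j < L.length →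
    (cano L acc).getD j 0 < (accF L acc).length ∧
    (accF L acc).getD ((cano L acc).getD j 0) 0 = L.getD j 0 := by
  intro L
  induction L with
  | nil => intro acc j hj; simp at hj
  | cons a L ih =>
      intro acc j hj
      set acc' := if a ∈ acc then acc else acc ++ [a] with hacc'
      have hpre : acc' <+: accF L acc' := accF_prefix L acc'
      have hlenacc' : acc'.length ≤ (accF L acc').length := hpre.length_le
      cases j with
      | zero =>
          have hval : (cano (a :: L) acc).getD 0 0 = acc.idxOf a := rfl
          have hidx : acc.idxOf a < acc'.length ∧ acc'.getD (acc.idxOf a) 0 = a := by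
            by_cases hmem : a ∈ acc
            · have hlt : acc.idxOf a < acc.length := List.idxOf_lt_length_iff.mpr hmem
              have : acc' = acc := by rw [hacc', if_pos hmem]
              rw [this]
              refine ⟨hlt, ?_⟩
              rw [List.getD_eq_getElem _ _ hlt]
              exact List.getElem_idxOf hlt
            · have hlen : acc.idxOf a = acc.length := List.idxOf_eq_length_iff.mpr hmem
              have : acc' = acc ++ [a] := by rw [hacc', if_neg hmem]
              rw [this, hlen]
              constructor
              · simp
              · have hlt : acc.length < (acc ++ [a]).length := by simp
                rw [List.getD_eq_getElem _ _ hlt]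
                simp
          refine ⟨lt_of_lt_of_le hidx.1 hlenacc', ?_⟩
          show (accF L acc').getD (acc.idxOf a) 0 = a
          rw [getD_of_prefix hpre hidx.1, hidx.2]
      | succ j =>
          have hj' : j < L.length := by simpa using hj
          have := ih acc' j hj'
          exact this

lemma cano_mem_ctuples : ∀ (L acc : List ℕ), acc.Nodup →
    cano L acc ∈ ctuples L.length acc.length := by
  intro L
  induction L with
  | nil => intro acc _; simp [cano, ctuples]
  | cons a L ih =>
      intro acc hnd
      set acc' := if a ∈ acc then acc else acc ++ [a] with hacc'
      have hnd' : acc'.Nodup := by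
        rw [hacc']; split
        · exact hnd
        · next hmem => simp [List.nodup_append, hnd, hmem]; exact fun b hb e => hmem (e ▸ hb)
      show acc.idxOf a :: cano L acc' ∈ ctuples (L.length + 1) acc.length
      show _ ∈ (List.range (acc.length+1)).flatMap fun v => (ctuples L.length (max acc.length (v+1))).map (v :: ·)
      rw [List.mem_flatMap]
      refine ⟨acc.idxOf a, ?_, ?_⟩
      · rw [List.mem_range]
        have := List.idxOf_le_length (a := a) (l := acc)
        omega
      · rw [List.mem_map]
        refine ⟨cano L acc', ?_, rfl⟩
        have hlen : acc'.length = max acc.length (acc.idxOf a + 1) := by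
          by_cases hmem : a ∈ acc
          · have hlt : acc.idxOf a < acc.length := List.idxOf_lt_length_iff.mpr hmem
            rw [hacc', if_pos hmem]
            omega
          · have hl : acc.idxOf a = acc.length := List.idxOf_eq_length_iff.mpr hmem
            rw [hacc', if_neg hmem]
            simp [hl]
        rw [← hlen]
        exact ih acc' hnd'

end Cano


def charOf (l : List ℕ) : ℕ → Fin 7 := fun x => ⟨l.getD x 0 % 7, Nat.mod_lt _ (by norm_num)⟩

def check (l : List ℕ) : Bool :=
  let f := charOf l
  let ma := mL f Ta6
  let mb := mL f Tb6
  decide (ma ≤ mb + 1) &&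
    (decide (ma ≠ mb + 1) ||
      (List.finRange 7).all fun c => decide (hL f Tb6 c ≠ mb) || decide (hL f Ta6 c = ma))

set_option maxRecDepth 100000 in
set_option maxHeartbeats 4000000 in
theorem checkAll : (ctuples 6 0).all check = true := by decide

lemma check_spec {l : List ℕ} (h : check l = true) :
    mcost (charOf l) Ta6 ≤ mcost (charOf l) Tb6 + 1 ∧
    (mcost (charOf l) Ta6 = mcost (charOf l) Tb6 + 1 →
      ∀ c : Fin 7, hcost (charOf l) Tb6 c = mcost (charOf l) Tb6 →
        hcost (charOf l) Ta6 c = mcost (charOf l) Ta6) := by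
  unfold check at h
  simp only [Bool.and_eq_true, Bool.or_eq_true, decide_eq_true_eq, List.all_eq_true,
    List.mem_finRange, true_implies] at h
  obtain ⟨h1, h2⟩ := h
  rw [mL_eq_mcost, mL_eq_mcost] at h1
  constructor
  · exact h1
  · intro heq c hc
    rcases h2 with h2 | h2
    · rw [mL_eq_mcost, mL_eq_mcost] at h2; exact absurd heq h2
    · have := h2 c
      rw [mL_eq_mcost, mL_eq_mcost, hL_eq_hcost, hL_eq_hcost] at this
      rcases this with h3 | h3
      · exact absurd hc h3
      · exact h3

lemma foldr_max_le {A : List ℕ} {y : ℕ} (h : y ∈ A) : y ≤ A.foldr max 0 := by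
  induction A with
  | nil => simp at h
  | cons a A ih =>
      rcases List.mem_cons.mp h with rfl | h
      · exact le_max_left _ _
      · exact le_trans (ih h) (le_max_right _ _)

lemma leaves_Ta6_lt : ∀ x ∈ Ta6.leaves, x < 6 := by decide
lemma leaves_Tb6_lt : ∀ x ∈ Tb6.leaves, x < 6 := by decide

/-- The per-block invariant. -/
def Inv (t : ℕ) (f : ℕ → ℕ) (A B : PTree ℕ) : Prop :=
  mcost f A ≤ mcost f B + t ∧
    (mcost f A = mcost f B + t → minset f B ⊆ minset f A)

lemma base_inv (f : ℕ → ℕ) : Inv 1 f Ta6 Tb6 := by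
  classical
  set L : List ℕ := [f 0, f 1, f 2, f 3, f 4, f 5] with hL6
  set A : List ℕ := accF L [] with hA
  set c : List ℕ := cano L [] with hc
  have hAnd : A.Nodup := accF_nodup L [] (by simp)
  have hAlen : A.length ≤ 6 := by
    have := accF_length_le L []
    simpa [hL6] using this
  have hspec : ∀ x : ℕ, x < 6 → c.getD x 0 < A.length ∧ A.getD (c.getD x 0) 0 = f x := by
    intro x hx
    have hxlen : x < L.length := by simp [hL6]; omega
    have := cano_spec L [] x hxlen
    have hgetL : L.getD x 0 = f x := by
      interval_cases x <;> simp [hL6]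
    rw [hgetL] at this
    exact this
  set mx : ℕ := A.foldr max 0 with hmx
  set ι : Fin 7 → ℕ := fun i => if h : (i : ℕ) < A.length then A.getD i 0 else mx + 1 + i with hι
  have hιinj : Function.Injective ι := by
    intro i j hij
    rw [hι] at hij
    simp only at hij
    by_cases hi : (i : ℕ) < A.length <;> by_cases hj : (j : ℕ) < A.length
    · rw [dif_pos hi, dif_pos hj] at hij
      have hieq : A.getD i 0 = A[(i : ℕ)] := List.getD_eq_getElem _ _ hi
      have hjeq : A.getD j 0 = A[(j : ℕ)] := List.getD_eq_getElem _ _ hj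
      rw [hieq, hjeq] at hij
      have := (List.Nodup.getElem_inj_iff hAnd).mp hij
      exact Fin.ext this
    · rw [dif_pos hi, dif_neg hj] at hij
      have hmem : A.getD i 0 ∈ A := by
        rw [List.getD_eq_getElem _ _ hi]; exact List.getElem_mem _
      have := foldr_max_le hmem
      omega
    · rw [dif_neg hi, dif_pos hj] at hij
      have hmem : A.getD j 0 ∈ A := by
        rw [List.getD_eq_getElem _ _ hj]; exact List.getElem_mem _
      have := foldr_max_le hmem
      omega
    · rw [dif_neg hi, dif_neg hj] at hij
      exact Fin.ext (by omega)
  set fc : ℕ → Fin 7 := charOf c with hfc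
  have hfcval : ∀ x : ℕ, x < 6 → (fc x : ℕ) = c.getD x 0 ∧ (fc x : ℕ) < A.length := by
    intro x hx
    have hs := hspec x hx
    have hlt7 : c.getD x 0 < 7 := by omega
    constructor
    · show c.getD x 0 % 7 = c.getD x 0
      exact Nat.mod_eq_of_lt hlt7
    · show c.getD x 0 % 7 < A.length
      rw [Nat.mod_eq_of_lt hlt7]; exact hs.1
  have hfresh : ∀ x : ℕ, x < 6 → fc x ≠ (6 : Fin 7) := by
    intro x hx heq
    have := (hfcval x hx).2
    rw [heq] at this
    have h6 : ((6 : Fin 7) : ℕ) = 6 := rfl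
    rw [h6] at this
    omega
  have hagree : ∀ x : ℕ, x < 6 → f x = ι (fc x) := by
    intro x hx
    obtain ⟨hv, hlt⟩ := hfcval x hx
    rw [hι]
    simp only
    rw [dif_pos hlt, hv]
    exact ((hspec x hx).2).symm
  -- check result for tuple c
  have hmem : c ∈ ctuples 6 0 := by
    have := cano_mem_ctuples L [] (by simp)
    simpa [hL6] using this
  have hcheck : check c = true := by
    have := List.all_eq_true.mp checkAll
    exact this c hmem
  obtain ⟨hF1, hF2⟩ := check_spec hcheck
  -- transfer to ℕ
  have htraA := hcost_transfer hιinj fc (6 : Fin 7) Ta6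
    (fun x hx => hfresh x (leaves_Ta6_lt x hx))
  have htraB := hcost_transfer hιinj fc (6 : Fin 7) Tb6
    (fun x hx => hfresh x (leaves_Tb6_lt x hx))
  have hmtraA : mcost (fun x => ι (fc x)) Ta6 = mcost fc Ta6 :=
    mcost_transfer hιinj fc (6 : Fin 7) Ta6 (fun x hx => hfresh x (leaves_Ta6_lt x hx))
  have hmtraB : mcost (fun x => ι (fc x)) Tb6 = mcost fc Tb6 :=
    mcost_transfer hιinj fc (6 : Fin 7) Tb6 (fun x hx => hfresh x (leaves_Tb6_lt x hx))
  have hcongA : hcost f Ta6 = hcost (fun x => ι (fc x)) Ta6 :=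
    hcost_congr (fun x hx => hagree x (leaves_Ta6_lt x hx))
  have hcongB : hcost f Tb6 = hcost (fun x => ι (fc x)) Tb6 :=
    hcost_congr (fun x hx => hagree x (leaves_Tb6_lt x hx))
  have hmcongA : mcost f Ta6 = mcost fc Ta6 := by
    rw [mcost_congr (f₂ := fun x => ι (fc x)) (fun x hx => hagree x (leaves_Ta6_lt x hx)), hmtraA]
  have hmcongB : mcost f Tb6 = mcost fc Tb6 := by
    rw [mcost_congr (f₂ := fun x => ι (fc x)) (fun x hx => hagree x (leaves_Tb6_lt x hx)), hmtraB]
  constructor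
  · rw [hmcongA, hmcongB]; exact hF1
  · intro heq d hd
    have heqF : mcost fc Ta6 = mcost fc Tb6 + 1 := by
      rw [← hmcongA, ← hmcongB]; exact heq
    have hdB : hcost (fun x => ι (fc x)) Tb6 d = mcost f Tb6 := by
      rw [← hcongB]; exact hd
    show hcost f Ta6 d = mcost f Ta6
    rw [hcongA, hmcongA]
    by_cases hdi : ∃ c', ι c' = d
    · obtain ⟨c', rfl⟩ := hdi
      rw [htraA.1 c']
      apply hF2 heqF c'
      rw [← htraB.1 c', hdB, hmcongB]
    · push_neg at hdi
      rw [htraA.2 d hdi]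
      apply hF2 heqF (6 : Fin 7)
      rw [← htraB.2 d hdi, hdB, hmcongB]

lemma inv_comp {t1 t2 : ℕ} {f : ℕ → ℕ} {A1 B1 A2 B2 : PTree ℕ}
    (h1 : Inv t1 f A1 B1) (h2 : Inv t2 f A2 B2) :
    Inv (t1 + t2) f (.node A1 A2) (.node B1 B2) := by
  classical
  obtain ⟨h1le, h1eq⟩ := h1
  obtain ⟨h2le, h2eq⟩ := h2
  by_cases hA : (minset f A1 ∩ minset f A2).Nonempty <;>
  by_cases hB : (minset f B1 ∩ minset f B2).Nonempty
  · -- both intersections nonempty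
    have hmA := mcost_node_inter f A1 A2 hA
    have hmB := mcost_node_inter f B1 B2 hB
    have hsA := minset_node_inter f A1 A2 hA
    have hsB := minset_node_inter f B1 B2 hB
    constructor
    · omega
    · intro heq
      rw [hsA, hsB]
      have e1 : mcost f A1 = mcost f B1 + t1 := by omega
      have e2 : mcost f A2 = mcost f B2 + t2 := by omega
      exact Set.inter_subset_inter (h1eq e1) (h2eq e2)
  · have hmA := mcost_node_inter f A1 A2 hA
    have hmB := mcost_node_empty f B1 B2 hB
    constructor
    · omega
    · intro heq; omega
  · -- A empty, B nonempty : the delicate case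
    have hmA := mcost_node_empty f A1 A2 hA
    have hmB := mcost_node_inter f B1 B2 hB
    have hsA := minset_node_empty f A1 A2 hA
    have hsB := minset_node_inter f B1 B2 hB
    have hkey : ¬ (mcost f A1 = mcost f B1 + t1 ∧ mcost f A2 = mcost f B2 + t2) := by
      rintro ⟨e1, e2⟩
      obtain ⟨d, hd1, hd2⟩ := hB
      exact hA ⟨d, h1eq e1 hd1, h2eq e2 hd2⟩
    constructor
    · omega
    · intro heq
      rw [hsA, hsB]
      have hone : mcost f A1 = mcost f B1 + t1 ∨ mcost f A2 = mcost f B2 + t2 := by omega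
      rcases hone with e1 | e2
      · exact fun d hd => Or.inl (h1eq e1 hd.1)
      · exact fun d hd => Or.inr (h2eq e2 hd.2)
  · have hmA := mcost_node_empty f A1 A2 hA
    have hmB := mcost_node_empty f B1 B2 hB
    have hsA := minset_node_empty f A1 A2 hA
    have hsB := minset_node_empty f B1 B2 hB
    constructor
    · omega
    · intro heq
      rw [hsA, hsB]
      have e1 : mcost f A1 = mcost f B1 + t1 := by omega
      have e2 : mcost f A2 = mcost f B2 + t2 := by omega
      exact Set.union_subset_union (h1eq e1) (h2eq e2)


lemma inv_shift {t : ℕ} {f : ℕ → ℕ} (s : ℕ) {A B : PTree ℕ}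
    (h : Inv t (fun x => f (x + s)) A B) : Inv t f (shiftT s A) (shiftT s B) := by
  unfold Inv shiftT at *
  rw [mcost_map, mcost_map, minset_map, minset_map]
  exact h

lemma inv_TA12 (f : ℕ → ℕ) : Inv 2 f TA12 TB12 := by
  have h1 := base_inv f
  have h2 := inv_shift 6 (base_inv (fun x => f (x + 6)))
  exact inv_comp h1 h2

lemma inv_TkA (n : ℕ) (f : ℕ → ℕ) : Inv (2 * (n + 1)) f (TkA n) (TkB n) := by
  induction n generalizing f with
  | zero => exact inv_TA12 f
  | succ n ih =>
      have h1 := ih f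
      have h2 := inv_shift (12 * (n + 1))
        (inv_TA12 (fun x => f (x + 12 * (n + 1))))
      have hcomp := inv_comp h1 h2
      have harith : 2 * (n + 1) + 2 = 2 * (n + 1 + 1) := by ring
      rw [harith] at hcomp
      exact hcomp

/-! ### Lower bound: the replicated character -/

def pat : ℕ → ℕ := fun x => [0,1,1,2,2,0].getD (x % 6) 0

def patF : ℕ → Fin 7 := charOf [0,1,1,2,2,0]

lemma pat_periodic {s : ℕ} (hs : 6 ∣ s) : (fun x => pat (x + s)) = pat := by
  funext x
  obtain ⟨m, rfl⟩ := hs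
  unfold pat
  rw [Nat.add_mul_mod_self_left]

lemma pat_lt (x : ℕ) : pat x ≤ 2 := by
  unfold pat
  have h : x % 6 < 6 := Nat.mod_lt _ (by norm_num)
  set y := x % 6
  interval_cases y <;> simp

lemma pat_agree (x : ℕ) (hx : x < 6) : pat x = ((patF x : Fin 7) : ℕ) := by
  unfold pat patF charOf
  have h : x % 6 = x := Nat.mod_eq_of_lt hx
  rw [h]
  show _ = [0,1,1,2,2,0].getD x 0 % 7
  interval_cases x <;> simp

lemma patF_fresh (x : ℕ) (hx : x < 6) : patF x ≠ (6 : Fin 7) := by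
  intro h
  have h1 := pat_agree x hx
  rw [h] at h1
  have := pat_lt x
  rw [show ((6 : Fin 7) : ℕ) = 6 from rfl] at h1
  omega

lemma mcost_pat_Ta6 : mcost pat Ta6 = 2 := by
  have hval : Function.Injective (fun i : Fin 7 => (i : ℕ)) := Fin.val_injective
  have htr : mcost (fun x => ((patF x : Fin 7) : ℕ)) Ta6 = mcost patF Ta6 :=
    mcost_transfer hval patF (6 : Fin 7) Ta6 (fun x hx => patF_fresh x (leaves_Ta6_lt x hx))
  have hcg : mcost pat Ta6 = mcost (fun x => ((patF x : Fin 7) : ℕ)) Ta6 :=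
    mcost_congr (fun x hx => pat_agree x (leaves_Ta6_lt x hx))
  rw [hcg, htr, ← mL_eq_mcost]
  decide

lemma mcost_pat_Tb6 : mcost pat Tb6 = 4 := by
  have hval : Function.Injective (fun i : Fin 7 => (i : ℕ)) := Fin.val_injective
  have htr : mcost (fun x => ((patF x : Fin 7) : ℕ)) Tb6 = mcost patF Tb6 :=
    mcost_transfer hval patF (6 : Fin 7) Tb6 (fun x hx => patF_fresh x (leaves_Tb6_lt x hx))
  have hcg : mcost pat Tb6 = mcost (fun x => ((patF x : Fin 7) : ℕ)) Tb6 :=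
    mcost_congr (fun x hx => pat_agree x (leaves_Tb6_lt x hx))
  rw [hcg, htr, ← mL_eq_mcost]
  decide

lemma pat_shift_block {s : ℕ} (hs : 6 ∣ s) (T : PTree ℕ) :
    mcost pat (shiftT s T) = mcost pat T ∧ minset pat (shiftT s T) = minset pat T := by
  unfold shiftT
  rw [mcost_map, minset_map]
  have : pat ∘ (fun x => x + s) = pat := by
    funext x
    have := congrFun (pat_periodic hs) x
    simpa using this
  rw [this]
  exact ⟨rfl, rfl⟩

lemma mcost_pat_TA12 : mcost pat TA12 = 4 ∧ minset pat TA12 = minset pat Ta6 := by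
  obtain ⟨hm, hs⟩ := pat_shift_block (by norm_num : (6:ℕ) ∣ 6) Ta6
  have hinter : (minset pat Ta6 ∩ minset pat (shiftT 6 Ta6)).Nonempty := by
    rw [hs, Set.inter_self]; exact minset_nonempty pat Ta6
  constructor
  · rw [show TA12 = PTree.node Ta6 (shiftT 6 Ta6) from rfl,
      mcost_node_inter pat _ _ hinter, hm, mcost_pat_Ta6]
  · rw [show TA12 = PTree.node Ta6 (shiftT 6 Ta6) from rfl,
      minset_node_inter pat _ _ hinter, hs, Set.inter_self]

lemma mcost_pat_TkA (n : ℕ) :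
    mcost pat (TkA n) = 4 * (n + 1) ∧ minset pat (TkA n) = minset pat Ta6 := by
  induction n with
  | zero =>
      obtain ⟨h1, h2⟩ := mcost_pat_TA12
      exact ⟨by rw [show TkA 0 = TA12 from rfl, h1], by rw [show TkA 0 = TA12 from rfl, h2]⟩
  | succ n ih =>
      obtain ⟨ih1, ih2⟩ := ih
      have hdvd : (6:ℕ) ∣ 12 * (n + 1) := ⟨2 * (n+1), by ring⟩
      obtain ⟨hm12, hs12⟩ := pat_shift_block hdvd TA12
      obtain ⟨hA1, hA2⟩ := mcost_pat_TA12
      have hinter : (minset pat (TkA n) ∩ minset pat (shiftT (12*(n+1)) TA12)).Nonempty := by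
        rw [ih2, hs12, hA2, Set.inter_self]
        exact minset_nonempty pat Ta6
      constructor
      · rw [show TkA (n+1) = PTree.node (TkA n) (shiftT (12*(n+1)) TA12) from rfl,
          mcost_node_inter pat _ _ hinter, ih1, hm12, hA1]
        ring
      · rw [show TkA (n+1) = PTree.node (TkA n) (shiftT (12*(n+1)) TA12) from rfl,
          minset_node_inter pat _ _ hinter, ih2, hs12, hA2, Set.inter_self]

lemma mcost_pat_TkB (n : ℕ) : 8 * (n + 1) ≤ mcost pat (TkB n) := by
  have hTB12 : 8 ≤ mcost pat TB12 := by
    obtain ⟨hm, _⟩ := pat_shift_block (by norm_num : (6:ℕ) ∣ 6) Tb6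
    have := mcost_node_ge pat Tb6 (shiftT 6 Tb6)
    rw [hm, mcost_pat_Tb6] at this
    exact this
  induction n with
  | zero => simpa [TkB] using hTB12
  | succ n ih =>
      have hdvd : (6:ℕ) ∣ 12 * (n + 1) := ⟨2 * (n+1), by ring⟩
      obtain ⟨hm12, _⟩ := pat_shift_block hdvd TB12
      have hge := mcost_node_ge pat (TkB n) (shiftT (12*(n+1)) TB12)
      rw [hm12] at hge
      have : 8 * (n+1+1) ≤ mcost pat (TkB n) + mcost pat TB12 := by omega
      exact le_trans this hge

/-! ### Size bound -/

def tsize {X : Type} : PTree X → ℕ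
  | .leaf _ => 0
  | .node l r => tsize l + tsize r + 1

lemma mcost_le_tsize {X C : Type} [DecidableEq C] [Nonempty C] (f : X → C) :
    ∀ T : PTree X, mcost f T ≤ tsize T := by
  intro T
  induction T with
  | leaf x =>
      have : hcost f (.leaf x) (f x) = 0 := by simp [hcost]
      have h := mcost_le_hcost f (.leaf x) (f x)
      simp [tsize]; omega
  | node l r ihl ihr =>
      have := mcost_node_le f l r
      show mcost f (.node l r) ≤ tsize l + tsize r + 1
      omega


/-- for every `k ≥ 1`, `gap(T^k_A, T^k_B) ≥ k + 1`.
(Recall `TkA (k-1) = T^k_A`.) -/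
theorem gap_TkA_TkB (k : ℕ) (hk : 1 ≤ k) :
    (k + 1 : ℤ) ≤ gap (TkA (k - 1)) (TkB (k - 1)) := by
  set n := k - 1 with hn
  have hnk : n + 1 = k := by omega
  set SX := { d : ℤ | ∃ f : ℕ → ℕ, d = (pscore f (TkB n) : ℤ) - (pscore f (TkA n) : ℤ) } with hSX
  set SY := { d : ℤ | ∃ f : ℕ → ℕ, d = (pscore f (TkA n) : ℤ) - (pscore f (TkB n) : ℤ) } with hSY
  have hXbdd : BddAbove SX := by
    refine ⟨(tsize (TkB n) : ℤ), ?_⟩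
    rintro d ⟨f, rfl⟩
    have h1 : pscore f (TkB n) ≤ tsize (TkB n) := by
      rw [pscore_eq_mcost]; exact mcost_le_tsize f (TkB n)
    have h2 : (0:ℤ) ≤ (pscore f (TkA n) : ℤ) := Int.ofNat_nonneg _
    have := Int.ofNat_le.mpr h1
    omega
  have hX : (4 * (k:ℤ)) ≤ maxDiff (TkA n) (TkB n) := by
    have hmem : ((pscore pat (TkB n) : ℤ) - (pscore pat (TkA n) : ℤ)) ∈ SX := ⟨pat, rfl⟩
    have hA : pscore pat (TkA n) = 4 * (n+1) := by
      rw [pscore_eq_mcost]; exact (mcost_pat_TkA n).1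
    have hB : 8 * (n+1) ≤ pscore pat (TkB n) := by
      rw [pscore_eq_mcost]; exact mcost_pat_TkB n
    have hle := le_csSup hXbdd hmem
    have hval : (4 * (k:ℤ)) ≤ (pscore pat (TkB n) : ℤ) - (pscore pat (TkA n) : ℤ) := by
      have hBz := Int.ofNat_le.mpr hB
      rw [hA]
      push_cast
      push_cast at hBz
      omega
    exact le_trans hval hle
  have hY : maxDiff (TkB n) (TkA n) ≤ 2 * (k:ℤ) := by
    apply csSup_le
    · exact ⟨_, pat, rfl⟩
    · rintro d ⟨f, rfl⟩
      have h1 : pscore f (TkA n) ≤ pscore f (TkB n) + 2 * (n+1) := by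
        rw [pscore_eq_mcost, pscore_eq_mcost]
        exact (inv_TkA n f).1
      have := Int.ofNat_le.mpr h1
      push_cast at this
      omega
  show (k + 1 : ℤ) ≤ |maxDiff (TkA n) (TkB n) - maxDiff (TkB n) (TkA n)|
  have hdiff : (k + 1 : ℤ) ≤ maxDiff (TkA n) (TkB n) - maxDiff (TkB n) (TkA n) := by
    have hk' : (1:ℤ) ≤ (k:ℤ) := by exact_mod_cast hk
    omega
  exact le_trans hdiff (le_abs_self _)


end MPDist
end
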